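/- arXiv:1608.00715 — 4 statements merged into one kernel-verified Lean document; each statement's English description precedes it below -/
import Mathlib

section
/- Fix n ≥ 0 and k ≥ 1, and let P be the bounded poset obtained from B_n^{[k]} by adjoining a maximum 1̂. Then the labeling λ̄ is an EL-labeling of P: for every pair x < y in P, the closed interval [x,y] contains exactly one maximal chain whose label word is strictly increasing in the product order on [n+1]×{1,…,k}, and the label word of this chain lexicographically precedes (i.e., at the first index where the two label words differ, its label is strictly smaller in the product order than) the label word of every other maximal chain of [x,y]. -/
/-!
STATEMENT 2: the labeling λ̄ is an EL-labeling of P = B_n^{[k]} ∪ {1̂}: every closed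
interval [x,y] with x < y has a unique maximal chain with strictly increasing label word
(in the product order), and this chain lexicographically precedes every other maximal
chain of [x,y].

Conventions.  The color set {1,…,k} is modeled by `Fin k` (0-indexed, order-isomorphic),
and a weak composition with support in [k] is modeled as a multiset over `Fin k` (the
color j appearing μ(j) times); e_i corresponds to the singleton {i}, and the order on
weak compositions is `Multiset.le`.  Letters are 0-indexed (`Fin n`), so labels live in
ℕ × ℕ: the cover (A,ν) ⋖ (A∪{x},ν+e_i) gets label (x,i), and the covers ([n],μ) ⋖ 1̂
get the label (n,0) (i.e. "(n+1, 1)" in 1-indexed terms); the label poset is the product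
order on ℕ × ℕ.  Chains are lists bottom to top; a maximal chain of [x,y] is a
cover-chain from x to y.
-/

/-- `B_n^{[k]}`: weighted subsets of [n] with colors in [k]. -/
@[ext] structure WSubK (n k : ℕ) where
  carrier : Finset (Fin n)
  wt : Multiset (Fin k)
  card_eq : Multiset.card wt = carrier.card

instance {n k : ℕ} : PartialOrder (WSubK n k) where
  le p q := p.carrier ⊆ q.carrier ∧ p.wt ≤ q.wt
  le_refl p := ⟨subset_rfl, le_rfl⟩
  le_trans a b c hab hbc := ⟨hab.1.trans hbc.1, hab.2.trans hbc.2⟩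
  le_antisymm a b hab hba :=
    WSubK.ext (Finset.Subset.antisymm hab.1 hba.1) (le_antisymm hab.2 hba.2)

/-- The EL-labeling λ̄ of `B_n^{[k]} ∪ {1̂}`: a cover (A,ν) ⋖ (A∪{x},ν+e_i) inside
`B_n^{[k]}` is labeled (x,i), and any cover into the adjoined top is labeled (n,0). -/
def labK {n k : ℕ} (p q : WithTop (WSubK n k)) : ℕ × ℕ :=
  match p, q with
  | (p : WSubK n k), (q : WSubK n k) =>
      (∑ x ∈ q.carrier \ p.carrier, (x : ℕ), ((q.wt - p.wt).map Fin.val).sum)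
  | _, _ => (n, 0)

/-- The label word of a chain (listed bottom to top). -/
def labelWordK {n k : ℕ} (c : List (WithTop (WSubK n k))) : List (ℕ × ℕ) :=
  List.zipWith labK c c.tail

/-- `c` is a maximal chain of the closed interval `[x,y]`: it runs from `x` to `y` and
each consecutive pair is a covering relation. -/
def IsMaxChain' {α : Type*} [PartialOrder α] (x y : α) (c : List α) : Prop :=
  c.Chain' (· ⋖ ·) ∧ c.head? = some x ∧ c.getLast? = some y

/-- `u` lexicographically precedes `v`: at the first index where they differ, the label
of `u` is strictly smaller (in the product order) than that of `v`. -/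
def LexPrec {α : Type*} [PartialOrder α] : List α → List α → Prop
  | a :: u, b :: v => (a = b ∧ LexPrec u v) ∨ (a ≠ b ∧ a < b)
  | _, _ => False

namespace ELW
variable {n k : ℕ}

lemma le_def {p q : WSubK n k} : p ≤ q ↔ p.carrier ⊆ q.carrier ∧ p.wt ≤ q.wt := Iff.rfl

lemma eq_of_le_of_carrier_eq {p q : WSubK n k} (h : p ≤ q) (hc : p.carrier = q.carrier) :
    p = q := by
  refine WSubK.ext hc (Multiset.eq_of_le_of_card_le h.2 ?_)
  rw [p.card_eq, q.card_eq, hc]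

lemma card_lt_of_lt {p q : WSubK n k} (h : p < q) : p.carrier.card < q.carrier.card := by
  rcases lt_or_ge p.carrier.card q.carrier.card with h1 | h1
  · exact h1
  · exact absurd (eq_of_le_of_carrier_eq h.le (Finset.eq_of_subset_of_card_le h.le.1 h1)) h.ne

/-- add a letter `x` with color `i` (no-op if `x` is already present). -/
def add (p : WSubK n k) (x : Fin n) (i : Fin k) : WSubK n k :=
  if h : x ∈ p.carrier then p
  else ⟨insert x p.carrier, i ::ₘ p.wt, by
    rw [Finset.card_insert_of_notMem h, Multiset.card_cons, p.card_eq]⟩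

lemma add_carrier {p : WSubK n k} {x : Fin n} {i : Fin k} (h : x ∉ p.carrier) :
    (add p x i).carrier = insert x p.carrier := by simp [add, h]

lemma add_wt {p : WSubK n k} {x : Fin n} {i : Fin k} (h : x ∉ p.carrier) :
    (add p x i).wt = i ::ₘ p.wt := by simp [add, h]

lemma lt_add {p : WSubK n k} {x : Fin n} {i : Fin k} (h : x ∉ p.carrier) :
    p < add p x i := by
  refine lt_of_le_of_ne ⟨?_, ?_⟩ ?_
  · rw [add_carrier h]; exact Finset.subset_insert _ _
  · rw [add_wt h]; exact (Multiset.le_cons_self _ _)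
  · intro he
    apply h
    rw [he, add_carrier h]
    exact Finset.mem_insert_self _ _

lemma msub_cons {j : Fin k} {w v : Multiset (Fin k)} (h : j ::ₘ w ≤ v) :
    v - w = j ::ₘ (v - (j ::ₘ w)) := by
  ext a
  have hc := Multiset.le_iff_count.1 h a
  simp only [Multiset.count_cons, Multiset.count_sub] at hc ⊢
  by_cases hj : a = j <;> simp [hj] at hc ⊢ <;> omega

lemma mem_sub_iff {m : Fin k} {w v : Multiset (Fin k)} :
    m ∈ v - w ↔ w.count m < v.count m := by
  rw [← Multiset.count_pos, Multiset.count_sub]; omega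

lemma cons_le_of_mem_sub {m : Fin k} {w v : Multiset (Fin k)} (hle : w ≤ v)
    (hm : m ∈ v - w) : m ::ₘ w ≤ v := by
  rw [mem_sub_iff] at hm
  rw [Multiset.le_iff_count]
  intro a
  have h1 := Multiset.le_iff_count.1 hle a
  simp only [Multiset.count_cons]
  by_cases ha : a = m
  · subst ha; simp; omega
  · simp [ha]; omega

/-- characterization of covers inside `WSubK`. -/
lemma covby_iff {p q : WSubK n k} :
    p ⋖ q ↔ ∃ b j, b ∉ p.carrier ∧ q.carrier = insert b p.carrier ∧ q.wt = j ::ₘ p.wt := by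
  constructor
  · rintro ⟨hlt, hmax⟩
    obtain ⟨b, hb⟩ : (q.carrier \ p.carrier).Nonempty :=
      Finset.sdiff_nonempty.2 fun hs =>
        (card_lt_of_lt hlt).not_ge (Finset.card_le_card hs)
    rw [Finset.mem_sdiff] at hb
    obtain ⟨j, hj⟩ : (q.wt - p.wt).toFinset.Nonempty := by
      have hcard := card_lt_of_lt hlt
      rw [Multiset.toFinset_nonempty, ← Multiset.card_pos, Multiset.card_sub hlt.le.2,
        p.card_eq, q.card_eq]
      omega
    rw [Multiset.mem_toFinset] at hj
    set r : WSubK n k := add p b j with hr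
    have hpr : p < r := lt_add hb.2
    have hrq : r ≤ q := by
      constructor
      · rw [add_carrier hb.2]
        exact Finset.insert_subset hb.1 hlt.le.1
      · rw [add_wt hb.2]
        exact cons_le_of_mem_sub hlt.le.2 hj
    have hrq' : r = q := hrq.lt_or_eq.resolve_left (hmax hpr)
    refine ⟨b, j, hb.2, ?_, ?_⟩
    · rw [← hrq', add_carrier hb.2]
    · rw [← hrq', add_wt hb.2]
  · rintro ⟨b, j, hb, hc, hw⟩
    have hlt : p < q := by
      refine lt_of_le_of_ne ⟨?_, ?_⟩ ?_
      · rw [hc]; exact Finset.subset_insert _ _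
      · rw [hw]; exact Multiset.le_cons_self _ _
      · rintro rfl
        apply hb; rw [hc]; exact Finset.mem_insert_self _ _
    refine ⟨hlt, fun r hpr hrq => ?_⟩
    have h1 := card_lt_of_lt hpr
    have h2 := card_lt_of_lt hrq
    rw [hc, Finset.card_insert_of_notMem hb] at h2
    omega

end ELW
namespace ELW
variable {n k : ℕ}

lemma lt_coe_elim {x : WithTop (WSubK n k)} {q : WSubK n k} (h : x < (q : WithTop (WSubK n k))) :
    ∃ p : WSubK n k, x = p ∧ p < q := by
  cases x with
  | top => exact absurd h not_top_lt
  | coe p => exact ⟨p, rfl, WithTop.coe_lt_coe.1 h⟩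

lemma coe_covby_coe {p q : WSubK n k} :
    (p : WithTop (WSubK n k)) ⋖ (q : WithTop (WSubK n k)) ↔ p ⋖ q := by
  constructor
  · rintro ⟨hlt, hmax⟩
    refine ⟨WithTop.coe_lt_coe.1 hlt, fun r hpr hrq => ?_⟩
    exact hmax (WithTop.coe_lt_coe.2 hpr) (WithTop.coe_lt_coe.2 hrq)
  · rintro ⟨hlt, hmax⟩
    refine ⟨WithTop.coe_lt_coe.2 hlt, fun r hpr hrq => ?_⟩
    obtain ⟨s, rfl, hsq⟩ := lt_coe_elim hrq
    exact hmax (WithTop.coe_lt_coe.1 hpr) hsq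

lemma carrier_univ_of_max {p r : WSubK n k} (hp : p.carrier = Finset.univ) (h : p ≤ r) :
    p = r := by
  refine eq_of_le_of_carrier_eq h ?_
  rw [hp, eq_comm, ← Finset.univ_subset_iff]
  exact hp ▸ h.1

lemma covby_top_of_univ {p : WSubK n k} (hp : p.carrier = Finset.univ) :
    (p : WithTop (WSubK n k)) ⋖ ⊤ := by
  constructor
  · exact WithTop.coe_lt_top p
  · intro c hpc hct
    cases c with
    | top => exact absurd hct (lt_irrefl _)
    | coe r =>
      have hpr := WithTop.coe_lt_coe.1 hpc
      exact hpr.ne (carrier_univ_of_max hp hpr.le)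

lemma univ_of_covby_top (hk : 1 ≤ k) {p : WSubK n k}
    (h : (p : WithTop (WSubK n k)) ⋖ ⊤) : p.carrier = Finset.univ := by
  by_contra hne
  obtain ⟨b, hb⟩ : (Finset.univ \ p.carrier).Nonempty :=
    Finset.sdiff_nonempty.2 fun hs => hne (Finset.univ_subset_iff.1 hs)
  rw [Finset.mem_sdiff] at hb
  exact h.2 (WithTop.coe_lt_coe.2 (lt_add (i := ⟨0, hk⟩) hb.2)) (WithTop.coe_lt_top _)

lemma not_top_covby {x : WithTop (WSubK n k)} : ¬ (⊤ : WithTop (WSubK n k)) ⋖ x :=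
  fun h => not_top_lt h.lt

lemma labK_top (x : WithTop (WSubK n k)) : labK x (⊤ : WithTop (WSubK n k)) = (n, 0) := by
  cases x <;> rfl

lemma insert_sdiff_self' {s : Finset (Fin n)} {b : Fin n} (hb : b ∉ s) :
    insert b s \ s = {b} := by
  ext v
  simp only [Finset.mem_sdiff, Finset.mem_insert, Finset.mem_singleton]
  constructor
  · rintro ⟨hv | hv, hvs⟩
    · exact hv
    · exact absurd hv hvs
  · rintro rfl; exact ⟨Or.inl rfl, hb⟩

lemma cons_sub_self {j : Fin k} {w : Multiset (Fin k)} : (j ::ₘ w) - w = {j} := by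
  ext a
  simp only [Multiset.count_sub, Multiset.count_cons, Multiset.count_singleton]
  by_cases ha : a = j <;> simp [ha] <;> omega

lemma labK_cover {p q : WSubK n k} {b : Fin n} {j : Fin k} (hb : b ∉ p.carrier)
    (hc : q.carrier = insert b p.carrier) (hw : q.wt = j ::ₘ p.wt) :
    labK (p : WithTop (WSubK n k)) (q : WithTop (WSubK n k)) = (b.val, j.val) := by
  show (∑ x ∈ q.carrier \ p.carrier, (x : ℕ), ((q.wt - p.wt).map Fin.val).sum) = _
  rw [hc, hw, insert_sdiff_self' hb, cons_sub_self]
  simp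

lemma labK_det {x z z' : WithTop (WSubK n k)} (h1 : x ⋖ z) (h2 : x ⋖ z')
    (h : labK x z = labK x z') : z = z' := by
  cases x with
  | top => exact absurd h1.lt not_top_lt
  | coe p =>
    cases z with
    | top =>
      cases z' with
      | top => rfl
      | coe r =>
        obtain ⟨b, j, hb, hc, hw⟩ := covby_iff.1 (coe_covby_coe.1 h2)
        rw [labK_top, labK_cover hb hc hw] at h
        exact absurd (congrArg Prod.fst h) (by simpa using (b.isLt).ne')
    | coe r =>
      obtain ⟨b, j, hb, hc, hw⟩ := covby_iff.1 (coe_covby_coe.1 h1)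
      cases z' with
      | top =>
        rw [labK_top, labK_cover hb hc hw] at h
        exact absurd (congrArg Prod.fst h) (by simpa using (b.isLt).ne)
      | coe r' =>
        obtain ⟨b', j', hb', hc', hw'⟩ := covby_iff.1 (coe_covby_coe.1 h2)
        rw [labK_cover hb hc hw, labK_cover hb' hc' hw'] at h
        obtain ⟨h1', h2'⟩ := Prod.mk.injEq .. ▸ h
        have hbb : b = b' := Fin.val_injective (by exact_mod_cast h1')
        have hjj : j = j' := Fin.val_injective (by exact_mod_cast h2')
        subst hbb; subst hjj
        congr 1
        exact WSubK.ext (by rw [hc, hc']) (by rw [hw, hw'])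

end ELW
namespace ELW
variable {n k : ℕ} {α : Type*} [PartialOrder α]

lemma chain_head_le_last : ∀ (c : List α), c.Chain' (· ⋖ ·) → ∀ a b,
    c.head? = some a → c.getLast? = some b → a ≤ b
  | [], _, a, b, h, _ => by simp at h
  | [x], _, a, b, h1, h2 => by
      simp at h1 h2; subst h1; subst h2; rfl
  | x :: z :: t, hc, a, b, h1, h2 => by
      simp only [List.head?_cons, Option.some.injEq] at h1
      subst h1
      rw [List.getLast?_cons_cons] at h2
      have hz := chain_head_le_last (z :: t) hc.tail z b rfl h2
      exact le_trans (List.isChain_cons_cons.1 hc).1.le hz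

lemma maxchain_self {a : α} {c : List α} (h : IsMaxChain' a a c) : c = [a] := by
  obtain ⟨hc, h1, h2⟩ := h
  cases c with
  | nil => simp at h1
  | cons x t =>
    simp only [List.head?_cons, Option.some.injEq] at h1
    subst h1
    cases t with
    | nil => rfl
    | cons z t' =>
      rw [List.getLast?_cons_cons] at h2
      have hz := chain_head_le_last (z :: t') hc.tail z x rfl h2
      exact absurd (lt_of_lt_of_le (List.isChain_cons_cons.1 hc).1.lt hz) (lt_irrefl _)

lemma maxchain_cons {a b : α} {c : List α} (h : IsMaxChain' a b c) (hne : a ≠ b) :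
    ∃ z t, c = a :: z :: t ∧ a ⋖ z ∧ z ≤ b ∧ IsMaxChain' z b (z :: t) := by
  obtain ⟨hc, h1, h2⟩ := h
  cases c with
  | nil => simp at h1
  | cons x t =>
    simp only [List.head?_cons, Option.some.injEq] at h1
    subst h1
    cases t with
    | nil =>
      simp only [List.getLast?_singleton, Option.some.injEq] at h2
      exact absurd h2 hne
    | cons z t' =>
      rw [List.getLast?_cons_cons] at h2
      exact ⟨z, t', rfl, (List.isChain_cons_cons.1 hc).1,
        chain_head_le_last (z :: t') hc.tail z b rfl h2, hc.tail, rfl, h2⟩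

lemma labelWordK_cons {x z : WithTop (WSubK n k)} {t : List (WithTop (WSubK n k))} :
    labelWordK (x :: z :: t) = labK x z :: labelWordK (z :: t) := rfl

lemma maxchain_singleton (a : α) : IsMaxChain' a a [a] := ⟨List.isChain_singleton a, rfl, rfl⟩

end ELW
namespace ELW
variable {n k : ℕ}

lemma sdiff_nonempty_of_lt {p q : WSubK n k} (h : p < q) :
    (q.carrier \ p.carrier).Nonempty :=
  Finset.sdiff_nonempty.2 fun hs =>
    (card_lt_of_lt h).not_ge (Finset.card_le_card hs)

lemma wtsub_nonempty_of_lt {p q : WSubK n k} (h : p < q) :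
    (q.wt - p.wt).toFinset.Nonempty := by
  have hcard := card_lt_of_lt h
  rw [Multiset.toFinset_nonempty, ← Multiset.card_pos, Multiset.card_sub h.le.2,
    p.card_eq, q.card_eq]
  omega

/-- the canonical (lexicographically first) cover step from `x` toward `y`. -/
def cnext (hk : 1 ≤ k) : WithTop (WSubK n k) → WithTop (WSubK n k) → WithTop (WSubK n k)
  | (p : WSubK n k), (q : WSubK n k) =>
      if h : (q.carrier \ p.carrier).Nonempty ∧ (q.wt - p.wt).toFinset.Nonempty then
        (add p ((q.carrier \ p.carrier).min' h.1) ((q.wt - p.wt).toFinset.min' h.2) :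
          WSubK n k)
      else ⊤
  | (p : WSubK n k), ⊤ =>
      if h : (Finset.univ \ p.carrier).Nonempty then
        (add p ((Finset.univ \ p.carrier).min' h) ⟨0, hk⟩ : WSubK n k)
      else ⊤
  | _, _ => ⊤

lemma cnext_coe_coe {hk : 1 ≤ k} {p q : WSubK n k} (h : p < q) :
    cnext hk (p : WithTop (WSubK n k)) (q : WithTop (WSubK n k)) =
      (add p ((q.carrier \ p.carrier).min' (sdiff_nonempty_of_lt h))
        ((q.wt - p.wt).toFinset.min' (wtsub_nonempty_of_lt h)) : WSubK n k) := by
  show dite _ _ _ = _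
  rw [dif_pos ⟨sdiff_nonempty_of_lt h, wtsub_nonempty_of_lt h⟩]

lemma cnext_coe_top {hk : 1 ≤ k} {p : WSubK n k} (h : (Finset.univ \ p.carrier).Nonempty) :
    cnext hk (p : WithTop (WSubK n k)) ⊤ =
      (add p ((Finset.univ \ p.carrier).min' h) ⟨0, hk⟩ : WSubK n k) := by
  show dite _ _ _ = _
  rw [dif_pos h]

lemma cnext_coe_top_univ {hk : 1 ≤ k} {p : WSubK n k} (h : p.carrier = Finset.univ) :
    cnext hk (p : WithTop (WSubK n k)) ⊤ = ⊤ := by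
  show dite _ _ _ = _
  rw [dif_neg]
  simp [h]

lemma mem_wtsub_of_cover {p r q : WSubK n k} {j : Fin k} (hw : r.wt = j ::ₘ p.wt)
    (hrq : r ≤ q) : j ∈ q.wt - p.wt := by
  rw [mem_sub_iff]
  have := Multiset.le_iff_count.1 hrq.2 j
  rw [hw, Multiset.count_cons_self] at this
  omega

/-- STEP: the canonical step is a cover, stays below `y`, and has the minimum label
among all covers of `x` below `y`. -/
lemma step (hk : 1 ≤ k) {x y : WithTop (WSubK n k)} (h : x < y) :
    x ⋖ cnext hk x y ∧ cnext hk x y ≤ y ∧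
      ∀ z', x ⋖ z' → z' ≤ y → labK x (cnext hk x y) ≤ labK x z' := by
  cases x with
  | top => exact absurd h not_top_lt
  | coe p =>
  cases y with
  | coe q =>
    have hpq : p < q := WithTop.coe_lt_coe.1 h
    rw [cnext_coe_coe hpq]
    set a := (q.carrier \ p.carrier).min' (sdiff_nonempty_of_lt hpq) with ha_def
    set m := (q.wt - p.wt).toFinset.min' (wtsub_nonempty_of_lt hpq) with hm_def
    have ha := Finset.mem_sdiff.1 ((q.carrier \ p.carrier).min'_mem (sdiff_nonempty_of_lt hpq))
    have hm : m ∈ q.wt - p.wt :=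
      Multiset.mem_toFinset.1 ((q.wt - p.wt).toFinset.min'_mem (wtsub_nonempty_of_lt hpq))
    have hcov : p ⋖ add p a m := covby_iff.2 ⟨a, m, ha.2, add_carrier ha.2, add_wt ha.2⟩
    refine ⟨coe_covby_coe.2 hcov, WithTop.coe_le_coe.2 ⟨?_, ?_⟩, ?_⟩
    · rw [add_carrier ha.2]
      exact Finset.insert_subset ha.1 hpq.le.1
    · rw [add_wt ha.2]
      exact cons_le_of_mem_sub hpq.le.2 hm
    · intro z' h1 h2
      cases z' with
      | top => simp at h2
      | coe r =>
        obtain ⟨b, j, hb, hc, hw⟩ := covby_iff.1 (coe_covby_coe.1 h1)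
        have hrq : r ≤ q := WithTop.coe_le_coe.1 h2
        rw [labK_cover ha.2 (add_carrier ha.2) (add_wt ha.2), labK_cover hb hc hw]
        constructor
        · have hbm : b ∈ q.carrier \ p.carrier := by
            rw [Finset.mem_sdiff]
            exact ⟨hrq.1 (hc ▸ Finset.mem_insert_self b p.carrier), hb⟩
          exact_mod_cast Finset.min'_le _ b hbm
        · have hjm : j ∈ q.wt - p.wt := mem_wtsub_of_cover hw hrq
          exact_mod_cast Finset.min'_le _ j (Multiset.mem_toFinset.2 hjm)
  | top =>
    by_cases hu : p.carrier = Finset.univ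
    · rw [cnext_coe_top_univ hu]
      refine ⟨covby_top_of_univ hu, le_refl _, ?_⟩
      intro z' h1 h2
      cases z' with
      | top => exact le_refl _
      | coe r =>
        obtain ⟨b, j, hb, hc, hw⟩ := covby_iff.1 (coe_covby_coe.1 h1)
        exact absurd (hu ▸ Finset.mem_univ b) hb
    · have hd : (Finset.univ \ p.carrier).Nonempty :=
        Finset.sdiff_nonempty.2 fun hs => hu (Finset.univ_subset_iff.1 hs)
      rw [cnext_coe_top hd]
      set a := (Finset.univ \ p.carrier).min' hd with ha_def
      have ha := Finset.mem_sdiff.1 ((Finset.univ \ p.carrier).min'_mem hd)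
      have hcov : p ⋖ add p a ⟨0, hk⟩ :=
        covby_iff.2 ⟨a, ⟨0, hk⟩, ha.2, add_carrier ha.2, add_wt ha.2⟩
      refine ⟨coe_covby_coe.2 hcov, le_top, ?_⟩
      intro z' h1 h2
      cases z' with
      | top =>
        exact absurd (univ_of_covby_top hk h1) hu
      | coe r =>
        obtain ⟨b, j, hb, hc, hw⟩ := covby_iff.1 (coe_covby_coe.1 h1)
        rw [labK_cover ha.2 (add_carrier ha.2) (add_wt ha.2), labK_cover hb hc hw]
        constructor
        · have hbm : b ∈ Finset.univ \ p.carrier := Finset.mem_sdiff.2 ⟨Finset.mem_univ b, hb⟩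
          exact_mod_cast Finset.min'_le _ b hbm
        · exact Nat.zero_le _

/-- D: consecutive canonical labels strictly increase. -/
lemma canon_lt (hk : 1 ≤ k) {x y : WithTop (WSubK n k)} (h : x < y)
    (hlt : cnext hk x y < y) :
    labK x (cnext hk x y) < labK (cnext hk x y) (cnext hk (cnext hk x y) y) := by
  cases x with
  | top => exact absurd h not_top_lt
  | coe p =>
  cases y with
  | coe q =>
    have hpq : p < q := WithTop.coe_lt_coe.1 h
    rw [cnext_coe_coe hpq] at hlt ⊢
    set a := (q.carrier \ p.carrier).min' (sdiff_nonempty_of_lt hpq) with ha_def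
    set m := (q.wt - p.wt).toFinset.min' (wtsub_nonempty_of_lt hpq) with hm_def
    have ha : a ∈ q.carrier ∧ a ∉ p.carrier :=
      Finset.mem_sdiff.1 (Finset.min'_mem _ (sdiff_nonempty_of_lt hpq))
    have hale : ∀ b ∈ q.carrier \ p.carrier, a ≤ b := fun b hb => Finset.min'_le _ b hb
    have hmle : ∀ j, j ∈ q.wt - p.wt → m ≤ j := fun j hj =>
      Finset.min'_le _ j (Multiset.mem_toFinset.2 hj)
    clear_value a m
    set z : WSubK n k := add p a m with hz_def
    have hz_car : z.carrier = insert a p.carrier := add_carrier ha.2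
    have hz_wt : z.wt = m ::ₘ p.wt := add_wt ha.2
    have hzq : z < q := WithTop.coe_lt_coe.1 hlt
    rw [cnext_coe_coe hzq]
    set a' := (q.carrier \ z.carrier).min' (sdiff_nonempty_of_lt hzq) with ha'_def
    set m' := (q.wt - z.wt).toFinset.min' (wtsub_nonempty_of_lt hzq) with hm'_def
    have ha' : a' ∈ q.carrier ∧ a' ∉ z.carrier :=
      Finset.mem_sdiff.1 (Finset.min'_mem _ (sdiff_nonempty_of_lt hzq))
    have hm' : m' ∈ q.wt - z.wt :=
      Multiset.mem_toFinset.1 (Finset.min'_mem _ (wtsub_nonempty_of_lt hzq))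
    have hlab1 : labK (p : WithTop (WSubK n k)) (z : WithTop (WSubK n k)) = (a.val, m.val) :=
      labK_cover ha.2 hz_car hz_wt
    have hlab2 : labK (z : WithTop (WSubK n k)) ((add z a' m' : WSubK n k) : WithTop (WSubK n k))
        = (a'.val, m'.val) := labK_cover ha'.2 (add_carrier ha'.2) (add_wt ha'.2)
    clear_value a' m' z
    have ha'2 : a' ≠ a ∧ a' ∉ p.carrier := by
      have hh := ha'.2
      rw [hz_car, Finset.mem_insert, not_or] at hh
      exact hh
    have ha'mem : a' ∈ q.carrier \ p.carrier := Finset.mem_sdiff.2 ⟨ha'.1, ha'2.2⟩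
    have haa' : a < a' := lt_of_le_of_ne (hale a' ha'mem) (Ne.symm ha'2.1)
    have hm'mem : m' ∈ q.wt - p.wt := by
      rw [mem_sub_iff] at hm' ⊢
      rw [hz_wt, Multiset.count_cons] at hm'
      split at hm' <;> omega
    have hmm' : m ≤ m' := hmle m' hm'mem
    rw [hlab1, hlab2, Prod.lt_iff]
    exact Or.inl ⟨by exact_mod_cast haa', by exact_mod_cast hmm'⟩
  | top =>
    by_cases hu : p.carrier = Finset.univ
    · rw [cnext_coe_top_univ hu] at hlt
      exact absurd hlt (lt_irrefl _)
    · have hd : (Finset.univ \ p.carrier).Nonempty :=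
        Finset.sdiff_nonempty.2 fun hs => hu (Finset.univ_subset_iff.1 hs)
      rw [cnext_coe_top hd] at hlt ⊢
      set a := (Finset.univ \ p.carrier).min' hd with ha_def
      have ha : a ∈ Finset.univ ∧ a ∉ p.carrier := Finset.mem_sdiff.1 (Finset.min'_mem _ hd)
      have hale : ∀ b ∈ Finset.univ \ p.carrier, a ≤ b := fun b hb => Finset.min'_le _ b hb
      clear_value a
      set z : WSubK n k := add p a ⟨0, hk⟩ with hz_def
      have hz_car : z.carrier = insert a p.carrier := add_carrier ha.2
      have hz_wt : z.wt = (⟨0, hk⟩ : Fin k) ::ₘ p.wt := add_wt ha.2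
      have hlab1 : labK (p : WithTop (WSubK n k)) (z : WithTop (WSubK n k)) = (a.val, 0) :=
        labK_cover ha.2 hz_car hz_wt
      by_cases hu' : z.carrier = Finset.univ
      · rw [cnext_coe_top_univ hu', labK_top, hlab1, Prod.lt_iff]
        exact Or.inl ⟨a.isLt, le_refl _⟩
      · have hd' : (Finset.univ \ z.carrier).Nonempty :=
          Finset.sdiff_nonempty.2 fun hs => hu' (Finset.univ_subset_iff.1 hs)
        rw [cnext_coe_top hd']
        set a' := (Finset.univ \ z.carrier).min' hd' with ha'_def
        have ha' : a' ∈ Finset.univ ∧ a' ∉ z.carrier := Finset.mem_sdiff.1 (Finset.min'_mem _ hd')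
        have hlab2 : labK (z : WithTop (WSubK n k))
            ((add z a' ⟨0, hk⟩ : WSubK n k) : WithTop (WSubK n k)) = (a'.val, 0) :=
          labK_cover ha'.2 (add_carrier ha'.2) (add_wt ha'.2)
        clear_value a' z
        have ha'2 : a' ≠ a ∧ a' ∉ p.carrier := by
          have hh := ha'.2
          rw [hz_car, Finset.mem_insert, not_or] at hh
          exact hh
        have ha'mem : a' ∈ Finset.univ \ p.carrier :=
          Finset.mem_sdiff.2 ⟨Finset.mem_univ a', ha'2.2⟩
        have haa' : a < a' := lt_of_le_of_ne (hale a' ha'mem) (Ne.symm ha'2.1)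
        rw [hlab1, hlab2, Prod.lt_iff]
        exact Or.inl ⟨by exact_mod_cast haa', le_refl _⟩

end ELW
namespace ELW
variable {n k : ℕ}

/-- target carrier of the top of an interval. -/
def Tcar : WithTop (WSubK n k) → Finset (Fin n)
  | (q : WSubK n k) => q.carrier
  | ⊤ => Finset.univ

lemma letters_mem (hk : 1 ≤ k) : ∀ (d : List (WithTop (WSubK n k))) (p : WSubK n k)
    (y : WithTop (WSubK n k)), IsMaxChain' (p : WithTop (WSubK n k)) y d →
    ∀ v : Fin n, v ∈ Tcar y \ p.carrier → ∃ ℓ ∈ labelWordK d, ℓ.1 = (v : ℕ)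
  | [], p, y, h, v, hv => by obtain ⟨_, h1, _⟩ := h; simp at h1
  | [x], p, y, h, v, hv => by
      obtain ⟨_, h1, h2⟩ := h
      simp only [List.head?_cons, Option.some.injEq] at h1
      simp only [List.getLast?_singleton, Option.some.injEq] at h2
      subst h1; subst h2
      simp only [Tcar, Finset.sdiff_self] at hv
      exact absurd hv (Finset.notMem_empty v)
  | x :: z :: t, p, y, h, v, hv => by
      obtain ⟨hc, h1, h2⟩ := h
      simp only [List.head?_cons, Option.some.injEq] at h1
      subst h1
      rw [List.getLast?_cons_cons] at h2
      have hcov : (p : WithTop (WSubK n k)) ⋖ z := (List.isChain_cons_cons.1 hc).1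
      cases z with
      | top =>
        have hy : y = ⊤ :=
          top_le_iff.1 (chain_head_le_last (⊤ :: t) hc.tail ⊤ y rfl h2)
        have hu : p.carrier = Finset.univ := univ_of_covby_top hk hcov
        rw [hy] at hv
        simp only [Tcar, hu, Finset.sdiff_self] at hv
        exact absurd hv (Finset.notMem_empty v)
      | coe r =>
        obtain ⟨b, j, hb, hcr, hw⟩ := covby_iff.1 (coe_covby_coe.1 hcov)
        rw [Finset.mem_sdiff] at hv
        by_cases hvb : v = b
        · refine ⟨labK (p : WithTop (WSubK n k)) (r : WithTop (WSubK n k)),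
            List.mem_cons_self, ?_⟩
          rw [labK_cover hb hcr hw, hvb]
        · have hv' : v ∈ Tcar y \ r.carrier := by
            rw [Finset.mem_sdiff, hcr, Finset.mem_insert]
            exact ⟨hv.1, fun hor => hor.elim hvb hv.2⟩
          obtain ⟨ℓ, hℓ1, hℓ2⟩ := letters_mem hk (↑r :: t) r y ⟨hc.tail, rfl, h2⟩ v hv'
          exact ⟨ℓ, List.mem_cons_of_mem _ hℓ1, hℓ2⟩

lemma colors_mem : ∀ (d : List (WithTop (WSubK n k))) (p q : WSubK n k),
    IsMaxChain' (p : WithTop (WSubK n k)) (q : WithTop (WSubK n k)) d →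
    ∀ m : Fin k, m ∈ q.wt - p.wt → ∃ ℓ ∈ labelWordK d, ℓ.2 = (m : ℕ)
  | [], p, q, h, m, hm => by obtain ⟨_, h1, _⟩ := h; simp at h1
  | [x], p, q, h, m, hm => by
      obtain ⟨_, h1, h2⟩ := h
      simp only [List.head?_cons, Option.some.injEq] at h1
      simp only [List.getLast?_singleton, Option.some.injEq] at h2
      subst h1
      have : p = q := by exact_mod_cast h2
      subst this
      have hz : p.wt - p.wt = 0 := by
        ext a; simp [Multiset.count_sub]
      rw [hz] at hm
      exact absurd hm (Multiset.notMem_zero m)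
  | x :: z :: t, p, q, h, m, hm => by
      obtain ⟨hc, h1, h2⟩ := h
      simp only [List.head?_cons, Option.some.injEq] at h1
      subst h1
      rw [List.getLast?_cons_cons] at h2
      have hcov : (p : WithTop (WSubK n k)) ⋖ z := (List.isChain_cons_cons.1 hc).1
      have hzq : z ≤ (q : WithTop (WSubK n k)) :=
        chain_head_le_last (z :: t) hc.tail z (↑q) rfl h2
      cases z with
      | top => simp at hzq
      | coe r =>
        obtain ⟨b, j, hb, hcr, hw⟩ := covby_iff.1 (coe_covby_coe.1 hcov)
        have hrq : r ≤ q := WithTop.coe_le_coe.1 hzq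
        have hsub : q.wt - p.wt = j ::ₘ (q.wt - (j ::ₘ p.wt)) :=
          msub_cons (hw ▸ hrq.2)
        rw [hsub, Multiset.mem_cons] at hm
        rcases hm with hm | hm
        · refine ⟨labK (p : WithTop (WSubK n k)) (r : WithTop (WSubK n k)),
            List.mem_cons_self, ?_⟩
          rw [labK_cover hb hcr hw, hm]
        · rw [← hw] at hm
          obtain ⟨ℓ, hℓ1, hℓ2⟩ := colors_mem (↑r :: t) r q ⟨hc.tail, rfl, h2⟩ m hm
          exact ⟨ℓ, List.mem_cons_of_mem _ hℓ1, hℓ2⟩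

lemma zero_color_mem : ∀ (d : List (WithTop (WSubK n k))) (p : WSubK n k),
    IsMaxChain' (p : WithTop (WSubK n k)) ⊤ d → ∃ ℓ ∈ labelWordK d, ℓ.2 = 0
  | [], p, h => by obtain ⟨_, h1, _⟩ := h; simp at h1
  | [x], p, h => by
      obtain ⟨_, h1, h2⟩ := h
      simp only [List.head?_cons, Option.some.injEq] at h1
      simp only [List.getLast?_singleton, Option.some.injEq] at h2
      subst h1
      simp at h2
  | x :: z :: t, p, h => by
      obtain ⟨hc, h1, h2⟩ := h
      simp only [List.head?_cons, Option.some.injEq] at h1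
      subst h1
      rw [List.getLast?_cons_cons] at h2
      cases z with
      | top =>
        exact ⟨labK (p : WithTop (WSubK n k)) ⊤, List.mem_cons_self, by rw [labK_top]⟩
      | coe r =>
        obtain ⟨ℓ, hℓ1, hℓ2⟩ := zero_color_mem (↑r :: t) r ⟨hc.tail, rfl, h2⟩
        exact ⟨ℓ, List.mem_cons_of_mem _ hℓ1, hℓ2⟩

/-- C: if the label of the first step is below all later labels, the first step is
the canonical one. -/
lemma forcing (hk : 1 ≤ k) {x y z' : WithTop (WSubK n k)} (h1 : x ⋖ z') (h2 : z' ≤ y)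
    (d' : List (WithTop (WSubK n k))) (hd' : IsMaxChain' z' y d')
    (hmin : ∀ ℓ ∈ labelWordK d', labK x z' ≤ ℓ) :
    labK x z' = labK x (cnext hk x y) := by
  cases x with
  | top => exact absurd h1.lt not_top_lt
  | coe p =>
  cases y with
  | coe q =>
    cases z' with
    | top => exact absurd h2 (by simp)
    | coe r =>
    have hrq : r ≤ q := WithTop.coe_le_coe.1 h2
    have hpq : p < q := lt_of_lt_of_le (WithTop.coe_lt_coe.1 h1.lt) hrq
    obtain ⟨b, j, hb, hcr, hw⟩ := covby_iff.1 (coe_covby_coe.1 h1)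
    rw [cnext_coe_coe hpq]
    set a := (q.carrier \ p.carrier).min' (sdiff_nonempty_of_lt hpq) with ha_def
    set m := (q.wt - p.wt).toFinset.min' (wtsub_nonempty_of_lt hpq) with hm_def
    have ha : a ∈ q.carrier ∧ a ∉ p.carrier :=
      Finset.mem_sdiff.1 (Finset.min'_mem _ (sdiff_nonempty_of_lt hpq))
    have hale : ∀ v ∈ q.carrier \ p.carrier, a ≤ v := fun v hv => Finset.min'_le _ v hv
    have hmle : ∀ i, i ∈ q.wt - p.wt → m ≤ i := fun i hi =>
      Finset.min'_le _ i (Multiset.mem_toFinset.2 hi)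
    have hm : m ∈ q.wt - p.wt :=
      Multiset.mem_toFinset.1 (Finset.min'_mem _ (wtsub_nonempty_of_lt hpq))
    clear_value a m
    have hba : b = a := by
      by_contra hne
      have hmem : a ∈ q.carrier \ r.carrier := by
        rw [Finset.mem_sdiff, hcr, Finset.mem_insert]
        exact ⟨ha.1, fun hor => hor.elim (fun hh => hne hh.symm) ha.2⟩
      obtain ⟨ℓ, hℓ1, hℓ2⟩ := letters_mem hk d' r (↑q) hd' a hmem
      have hle := hmin ℓ hℓ1
      rw [labK_cover hb hcr hw] at hle
      have hba' : (b : ℕ) ≤ (a : ℕ) := hℓ2 ▸ hle.1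
      have hab : a ≤ b := hale b (Finset.mem_sdiff.2 ⟨hrq.1 (hcr ▸ Finset.mem_insert_self b _), hb⟩)
      exact hne (Fin.val_injective (le_antisymm hba' (by exact_mod_cast hab)))
    have hjm : j = m := by
      by_contra hne
      have hmem : m ∈ q.wt - r.wt := by
        have hsub : q.wt - p.wt = j ::ₘ (q.wt - (j ::ₘ p.wt)) := msub_cons (hw ▸ hrq.2)
        have hmm : m ∈ q.wt - p.wt := hm
        rw [hsub, Multiset.mem_cons] at hmm
        rcases hmm with hmm | hmm
        · exact absurd hmm.symm hne
        · rw [← hw] at hmm; exact hmm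
      obtain ⟨ℓ, hℓ1, hℓ2⟩ := colors_mem d' r q hd' m hmem
      have hle := hmin ℓ hℓ1
      rw [labK_cover hb hcr hw] at hle
      have hjm' : (j : ℕ) ≤ (m : ℕ) := hℓ2 ▸ hle.2
      have hmj : m ≤ j := hmle j (mem_wtsub_of_cover hw hrq)
      exact hne (Fin.val_injective (le_antisymm hjm' (by exact_mod_cast hmj)))
    subst hba; subst hjm
    rw [labK_cover hb hcr hw,
      labK_cover ha.2 (add_carrier ha.2) (add_wt ha.2)]
  | top =>
    cases z' with
    | top =>
      have hu : p.carrier = Finset.univ := univ_of_covby_top hk h1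
      rw [cnext_coe_top_univ hu]
    | coe r =>
      obtain ⟨b, j, hb, hcr, hw⟩ := covby_iff.1 (coe_covby_coe.1 h1)
      have hd : (Finset.univ \ p.carrier).Nonempty :=
        ⟨b, Finset.mem_sdiff.2 ⟨Finset.mem_univ b, hb⟩⟩
      rw [cnext_coe_top hd]
      set a := (Finset.univ \ p.carrier).min' hd with ha_def
      have ha : a ∈ Finset.univ ∧ a ∉ p.carrier := Finset.mem_sdiff.1 (Finset.min'_mem _ hd)
      have hale : ∀ v ∈ Finset.univ \ p.carrier, a ≤ v := fun v hv => Finset.min'_le _ v hv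
      clear_value a
      have hba : b = a := by
        by_contra hne
        have hmem : a ∈ Tcar (⊤ : WithTop (WSubK n k)) \ r.carrier := by
          rw [Finset.mem_sdiff, hcr, Finset.mem_insert]
          exact ⟨Finset.mem_univ a, fun hor => hor.elim (fun hh => hne hh.symm) ha.2⟩
        obtain ⟨ℓ, hℓ1, hℓ2⟩ := letters_mem hk d' r ⊤ hd' a hmem
        have hle := hmin ℓ hℓ1
        rw [labK_cover hb hcr hw] at hle
        have hba' : (b : ℕ) ≤ (a : ℕ) := hℓ2 ▸ hle.1
        have hab : a ≤ b := hale b (Finset.mem_sdiff.2 ⟨Finset.mem_univ b, hb⟩)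
        exact hne (Fin.val_injective (le_antisymm hba' (by exact_mod_cast hab)))
      have hj0 : (j : ℕ) = 0 := by
        obtain ⟨ℓ, hℓ1, hℓ2⟩ := zero_color_mem d' r hd'
        have hle := hmin ℓ hℓ1
        rw [labK_cover hb hcr hw] at hle
        have := hℓ2 ▸ hle.2
        omega
      subst hba
      rw [labK_cover hb hcr hw, labK_cover ha.2 (add_carrier ha.2) (add_wt ha.2), hj0]

end ELW
namespace ELW
variable {n k : ℕ}

def muW : WithTop (WSubK n k) → ℕ
  | (p : WSubK n k) => p.carrier.card
  | ⊤ => n + 1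

lemma mu_lt {x y : WithTop (WSubK n k)} (h : x < y) : muW x < muW y := by
  cases x with
  | top => exact absurd h not_top_lt
  | coe p =>
    cases y with
    | coe q => exact card_lt_of_lt (WithTop.coe_lt_coe.1 h)
    | top =>
      show p.carrier.card < n + 1
      have h2 : p.carrier.card ≤ n := by simpa using Finset.card_le_univ p.carrier
      omega

lemma mu_cover (hk : 1 ≤ k) {x z : WithTop (WSubK n k)} (h : x ⋖ z) : muW z = muW x + 1 := by
  cases x with
  | top => exact absurd h.lt not_top_lt
  | coe p =>
    cases z with
    | coe r =>
      obtain ⟨b, j, hb, hc, hw⟩ := covby_iff.1 (coe_covby_coe.1 h)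
      show r.carrier.card = p.carrier.card + 1
      rw [hc, Finset.card_insert_of_notMem hb]
    | top =>
      have hu := univ_of_covby_top hk h
      show n + 1 = p.carrier.card + 1
      rw [hu, Finset.card_univ, Fintype.card_fin]

lemma aux_refl (x : WithTop (WSubK n k)) :
    ∃ c : List (WithTop (WSubK n k)),
      (IsMaxChain' x x c ∧ (labelWordK c).Chain' (· < ·)) ∧
      (∀ d, IsMaxChain' x x d → (labelWordK d).Chain' (· < ·) → d = c) ∧
      (∀ d, IsMaxChain' x x d → d ≠ c → LexPrec (labelWordK c) (labelWordK d)) :=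
  ⟨[x], ⟨maxchain_singleton x, List.isChain_nil⟩,
    fun d hd _ => maxchain_self hd,
    fun d hd hne => absurd (maxchain_self hd) hne⟩

lemma aux (hk : 1 ≤ k) : ∀ (N : ℕ) (x y : WithTop (WSubK n k)), x ≤ y → muW y - muW x ≤ N →
    ∃ c : List (WithTop (WSubK n k)),
      (IsMaxChain' x y c ∧ (labelWordK c).Chain' (· < ·)) ∧
      (∀ d, IsMaxChain' x y d → (labelWordK d).Chain' (· < ·) → d = c) ∧
      (∀ d, IsMaxChain' x y d → d ≠ c → LexPrec (labelWordK c) (labelWordK d)) := by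
  intro N
  induction N with
  | zero =>
    intro x y hxy hN
    rcases eq_or_lt_of_le hxy with rfl | hlt
    · exact aux_refl x
    · exact absurd hN (by have := mu_lt hlt; omega)
  | succ N ih =>
    intro x y hxy hN
    rcases eq_or_lt_of_le hxy with rfl | hlt
    · exact aux_refl x
    · obtain ⟨hcov, hzy, hminim⟩ := step hk hlt
      set z := cnext hk x y with hz_def
      have hmuz : muW z = muW x + 1 := mu_cover hk hcov
      have hmuy : muW x < muW y := mu_lt hlt
      have hN' : muW y - muW z ≤ N := by omega
      obtain ⟨c', ⟨hc'max, hc'inc⟩, hc'uniq, hc'lex⟩ := ih z y hzy hN'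
      obtain ⟨t₀, rfl⟩ : ∃ t₀, c' = z :: t₀ := by
        cases c' with
        | nil => exact absurd hc'max.2.1 (by simp)
        | cons w t =>
          have : w = z := by
            have := hc'max.2.1
            simp only [List.head?_cons, Option.some.injEq] at this
            exact this
          exact ⟨t, by rw [this]⟩
      refine ⟨x :: z :: t₀, ⟨⟨List.isChain_cons_cons.2 ⟨hcov, hc'max.1⟩, rfl, ?_⟩, ?_⟩, ?_, ?_⟩
      · rw [List.getLast?_cons_cons]
        exact hc'max.2.2
      · -- increasing label word
        rw [labelWordK_cons]
        refine List.isChain_cons.2 ⟨?_, hc'inc⟩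
        intro ℓ₀ hℓ₀
        cases t₀ with
        | nil => simp [labelWordK] at hℓ₀
        | cons z₂ t₂ =>
          rw [labelWordK_cons] at hℓ₀
          simp only [List.head?_cons, Option.mem_def, Option.some.injEq] at hℓ₀
          subst hℓ₀
          have hcov2 : z ⋖ z₂ := (List.isChain_cons_cons.1 hc'max.1).1
          have hz₂y : z₂ ≤ y := by
            have h2 := hc'max.2.2
            rw [List.getLast?_cons_cons] at h2
            exact chain_head_le_last (z₂ :: t₂) hc'max.1.tail z₂ y rfl h2
          have hzylt : z < y := lt_of_lt_of_le hcov2.lt hz₂y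
          have hD := canon_lt hk hlt (hz_def ▸ hzylt)
          have hB := (step hk hzylt).2.2 z₂ hcov2 hz₂y
          exact lt_of_lt_of_le (hz_def ▸ hD) hB
      · -- uniqueness
        intro d hd hinc
        obtain ⟨z', t, rfl, hcov', hz'y, hd'⟩ := maxchain_cons hd hlt.ne
        rw [labelWordK_cons] at hinc
        have hpair := List.isChain_iff_pairwise.1 hinc
        have hmin' : ∀ ℓ ∈ labelWordK (z' :: t), labK x z' < ℓ := (List.pairwise_cons.1 hpair).1
        have heq : labK x z' = labK x z :=
          forcing hk hcov' hz'y _ hd' (fun ℓ hℓ => (hmin' ℓ hℓ).le)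
        have hz'z : z' = z := labK_det hcov' hcov heq
        subst hz'z
        have htt := hc'uniq (z :: t) hd' hinc.tail
        rw [htt]
      · -- lex minimality
        intro d hd hne
        obtain ⟨z', t, rfl, hcov', hz'y, hd'⟩ := maxchain_cons hd hlt.ne
        rw [labelWordK_cons, labelWordK_cons]
        by_cases hzz : z' = z
        · subst hzz
          have hne' : (z :: t) ≠ (z :: t₀) := fun hh => hne (by rw [hh])
          exact Or.inl ⟨rfl, hc'lex (z :: t) hd' hne'⟩
        · have hne2 : labK x z ≠ labK x z' := fun hh => hzz (labK_det hcov' hcov hh.symm)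
          have hle := hminim z' hcov' hz'y
          exact Or.inr ⟨hne2, lt_of_le_of_ne hle hne2⟩

end ELW

theorem EL_labeling_of_weighted_boolean_algebra (n k : ℕ) (hk : 1 ≤ k)
    (x y : WithTop (WSubK n k)) (hxy : x < y) :
    ∃ c : List (WithTop (WSubK n k)),
      (IsMaxChain' x y c ∧ (labelWordK c).Chain' (· < ·)) ∧
      (∀ d : List (WithTop (WSubK n k)),
        IsMaxChain' x y d → (labelWordK d).Chain' (· < ·) → d = c) ∧
      (∀ d : List (WithTop (WSubK n k)),
        IsMaxChain' x y d → d ≠ c → LexPrec (labelWordK c) (labelWordK d)) :=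
  ELW.aux hk (ELW.muW y - ELW.muW x) x y hxy.le (le_refl _)
end

section
/- For every k ≥ 1 the following identity holds in the ring of formal power series in y over ℚ[x_1,…,x_k]: ( ∑_{n≥0} (−1)^n h_n(x_1,…,x_k) y^n/n! ) · ( ∑_{n≥0} ( ∑_{μ ∈ wcomp_n, supp(μ) ⊆ [k]} |Ninc_μ| x^μ ) y^n/n! ) = 1, where h_n denotes the complete homogeneous symmetric polynomial of degree n. -/
/-!
STATEMENT 4: in the ring of formal power series in y over ℚ[x_1,…,x_k]:
( ∑_{n≥0} (−1)^n h_n(x) yⁿ/n! ) · ( ∑_{n≥0} ( ∑_{μ ∈ wcomp_n, supp(μ)⊆[k]} |Ninc_μ| x^μ ) yⁿ/n! ) = 1.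

Colors are 0-indexed: the color set {1,…,k} is modeled by `Fin k` (order-isomorphic),
and a weak composition of n with support in [k] is a function `μ : Fin k → ℕ` lying in
`Finset.Nat.antidiagonalTuple k n`.
-/

open MvPolynomial

/-- An ascent of the colored permutation `(σ, c)`. -/
def HasAscent {n : ℕ} {C : Type*} [Preorder C] (σ : Equiv.Perm (Fin n)) (c : Fin n → C) : Prop :=
  ∃ i : ℕ, ∃ h : i + 1 < n,
    σ ⟨i, Nat.lt_of_succ_lt h⟩ < σ ⟨i + 1, h⟩ ∧
      c (σ ⟨i, Nat.lt_of_succ_lt h⟩) ≤ c (σ ⟨i + 1, h⟩)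

/-- `|Ninc_μ|`: the number of ascent-free colored permutations of `[n]`, with colors in
`Fin k`, whose content is `μ : Fin k → ℕ`. -/
noncomputable def nincCount (n k : ℕ) (μ : Fin k → ℕ) : ℕ :=
  Nat.card {w : Equiv.Perm (Fin n) × (Fin n → Fin k) //
    (∀ j : Fin k, (Finset.univ.filter (fun x => w.2 x = j)).card = μ j) ∧ ¬ HasAscent w.1 w.2}

/-- The complete homogeneous symmetric polynomial of degree `n` in `k` variables over ℚ. -/
noncomputable def hsymmPoly (k n : ℕ) : MvPolynomial (Fin k) ℚ :=
  ∑ μ ∈ Finset.Nat.antidiagonalTuple k n, ∏ j : Fin k, (X j) ^ μ j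

open Finset Equiv

open scoped Classical

variable {k : ℕ}


/-- ascent at index `i`. -/
def AscI {n : ℕ} (σ : Equiv.Perm (Fin n)) (c : Fin n → Fin k) (i : ℕ) (h : i + 1 < n) : Prop :=
  σ ⟨i, Nat.lt_of_succ_lt h⟩ < σ ⟨i + 1, h⟩ ∧
    c (σ ⟨i, Nat.lt_of_succ_lt h⟩) ≤ c (σ ⟨i + 1, h⟩)

lemma hasAscent_iff {n : ℕ} (σ : Equiv.Perm (Fin n)) (c : Fin n → Fin k) :
    HasAscent σ c ↔ ∃ i, ∃ h : i + 1 < n, AscI σ c i h := Iff.rfl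

/-- weight of a coloring -/
noncomputable def wgt {n : ℕ} (c : Fin n → Fin k) : MvPolynomial (Fin k) ℚ :=
  ∏ v, X (c v)

/-- content of a coloring -/
def cont {n : ℕ} (c : Fin n → Fin k) : Fin k → ℕ :=
  fun j => (Finset.univ.filter fun v => c v = j).card

lemma cont_mem_antidiagonalTuple {n : ℕ} (c : Fin n → Fin k) :
    cont c ∈ Finset.Nat.antidiagonalTuple k n := by
  rw [Finset.Nat.mem_antidiagonalTuple]
  classical
  have h := Finset.card_eq_sum_card_fiberwise
    (fun v (_ : v ∈ (Finset.univ : Finset (Fin n))) => Finset.mem_univ (c v))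
  simpa [cont] using h.symm

lemma prod_pow_cont {n : ℕ} (c : Fin n → Fin k) :
    (∏ j : Fin k, (X j : MvPolynomial (Fin k) ℚ) ^ cont c j) = wgt c := by
  classical
  rw [wgt, ← Finset.prod_fiberwise_of_maps_to (fun v _ => Finset.mem_univ (c v))
    (fun v => (X (c v) : MvPolynomial (Fin k) ℚ))]
  refine Finset.prod_congr rfl fun j _ => ?_
  rw [cont, ← Finset.prod_const]
  exact Finset.prod_congr rfl fun v hv => by rw [(Finset.mem_filter.1 hv).2]

/-- the `n`-th inner sum of the second series equals the sum of weights over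
ascent-free colored permutations. -/
noncomputable def dPoly (k n : ℕ) : MvPolynomial (Fin k) ℚ :=
  ∑ w ∈ Finset.univ.filter
      (fun w : Equiv.Perm (Fin n) × (Fin n → Fin k) => ¬ HasAscent w.1 w.2),
    wgt w.2

lemma dPoly_eq (n : ℕ) :
    (∑ μ ∈ Finset.Nat.antidiagonalTuple k n,
        (nincCount n k μ : MvPolynomial (Fin k) ℚ) * ∏ j : Fin k, (X j) ^ μ j) = dPoly k n := by
  classical
  have key : ∀ μ ∈ Finset.Nat.antidiagonalTuple k n,
      (nincCount n k μ : MvPolynomial (Fin k) ℚ) * ∏ j : Fin k, (X j) ^ μ j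
        = ∑ w ∈ (Finset.univ.filter
            (fun w : Equiv.Perm (Fin n) × (Fin n → Fin k) => ¬ HasAscent w.1 w.2)).filter
            (fun w => cont w.2 = μ), wgt w.2 := by
    intro μ _
    have hcard : nincCount n k μ = ((Finset.univ.filter
        (fun w : Equiv.Perm (Fin n) × (Fin n → Fin k) => ¬ HasAscent w.1 w.2)).filter
        (fun w => cont w.2 = μ)).card := by
      rw [nincCount, Nat.card_eq_fintype_card, Fintype.card_subtype]
      congr 1
      rw [Finset.filter_filter]
      refine Finset.filter_congr fun w _ => ?_
      constructor
      · rintro ⟨h1, h2⟩; exact ⟨h2, funext h1⟩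
      · rintro ⟨h2, h1⟩; exact ⟨fun j => congrFun h1 j, h2⟩
    have hval : ∀ w ∈ (Finset.univ.filter
        (fun w : Equiv.Perm (Fin n) × (Fin n → Fin k) => ¬ HasAscent w.1 w.2)).filter
        (fun w => cont w.2 = μ), wgt w.2 = ∏ j : Fin k, (X j : MvPolynomial (Fin k) ℚ) ^ μ j := by
      intro w hw
      rw [Finset.mem_filter] at hw
      rw [← hw.2, prod_pow_cont]
    rw [hcard, Finset.sum_congr rfl hval, Finset.sum_const, nsmul_eq_mul]
  rw [Finset.sum_congr rfl key, dPoly,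
    Finset.sum_fiberwise_of_maps_to (fun w _ => cont_mem_antidiagonalTuple w.2)]

section Two
variable {k : ℕ}


/-- partial sums of a weak composition -/
def Apar (μ : Fin k → ℕ) (m : ℕ) : ℕ :=
  ∑ j ∈ Finset.univ.filter (fun j : Fin k => (j : ℕ) < m), μ j

lemma Apar_zero (μ : Fin k → ℕ) : Apar μ 0 = 0 := by simp [Apar]

lemma Apar_mono (μ : Fin k → ℕ) {a b : ℕ} (hab : a ≤ b) : Apar μ a ≤ Apar μ b := by
  apply Finset.sum_le_sum_of_subset
  intro j hj
  simp only [Finset.mem_filter, Finset.mem_univ, true_and] at hj ⊢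
  omega

lemma Apar_succ (μ : Fin k → ℕ) (j : Fin k) :
    Apar μ (j.1 + 1) = Apar μ j.1 + μ j := by
  rw [Apar, Apar]
  have : Finset.univ.filter (fun i : Fin k => (i : ℕ) < j.1 + 1)
      = insert j (Finset.univ.filter (fun i : Fin k => (i : ℕ) < j.1)) := by
    ext i
    simp only [Finset.mem_filter, Finset.mem_univ, true_and, Finset.mem_insert]
    constructor
    · intro h
      rcases Nat.lt_succ_iff_lt_or_eq.1 h with h | h
      · exact Or.inr (by simpa using h)
      · exact Or.inl (Fin.ext h)
    · rintro (rfl | h)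
      · omega
      · simp at h; omega
  rw [this, Finset.sum_insert (by simp)]
  ring

lemma Apar_of_ge (μ : Fin k → ℕ) {m : ℕ} (hm : k ≤ m) : Apar μ m = ∑ j, μ j := by
  rw [Apar]
  congr 1
  rw [Finset.filter_true_of_mem]
  intro j _
  exact lt_of_lt_of_le j.2 hm

/-- the monotone word with content `μ` -/
noncomputable def mword (hk : 0 < k) (μ : Fin k → ℕ) (n : ℕ) : Fin n → Fin k :=
  fun p => ⟨Nat.findGreatest (fun m => Apar μ m ≤ p.1) (k - 1),
    lt_of_le_of_lt (Nat.findGreatest_le _) (by omega)⟩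

lemma mword_spec (hk : 0 < k) (μ : Fin k → ℕ) {n : ℕ} (hsum : ∑ j, μ j = n) (p : Fin n) :
    Apar μ (mword hk μ n p).1 ≤ p.1 ∧ p.1 < Apar μ ((mword hk μ n p).1 + 1) := by
  have hgdef : (mword hk μ n p).1 = Nat.findGreatest (fun m => Apar μ m ≤ p.1) (k - 1) := rfl
  constructor
  · rw [hgdef]
    exact Nat.findGreatest_spec (P := fun m => Apar μ m ≤ p.1) (m := 0) (Nat.zero_le _)
      (by show Apar μ 0 ≤ p.1; rw [Apar_zero]; omega)
  · by_cases hgk : (mword hk μ n p).1 + 1 ≤ k - 1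
    · by_contra hcon
      push_neg at hcon
      exact Nat.findGreatest_is_greatest (P := fun m => Apar μ m ≤ p.1)
        (by rw [← hgdef]; omega) hgk hcon
    · have h2 : k ≤ (mword hk μ n p).1 + 1 := by omega
      rw [Apar_of_ge μ h2, hsum]
      exact p.2

/-- uniqueness of the interval characterization -/
lemma interval_unique (μ : Fin k → ℕ) {p : ℕ} {a b : ℕ}
    (ha : Apar μ a ≤ p ∧ p < Apar μ (a + 1)) (hb : Apar μ b ≤ p ∧ p < Apar μ (b + 1)) :
    a = b := by
  by_contra hab
  rcases Nat.lt_or_ge a b with h | h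
  · have := Apar_mono μ (show a + 1 ≤ b by omega)
    omega
  · have hba : b < a := by omega
    have := Apar_mono μ (show b + 1 ≤ a by omega)
    omega

lemma mword_monotone (hk : 0 < k) (μ : Fin k → ℕ) {n : ℕ} (hsum : ∑ j, μ j = n) :
    Monotone (mword hk μ n) := by
  intro p q hpq
  by_contra hcon
  push_neg at hcon
  have hp := mword_spec hk μ hsum p
  have hq := mword_spec hk μ hsum q
  have h1 : (mword hk μ n q).1 + 1 ≤ (mword hk μ n p).1 := hcon
  have := Apar_mono μ h1
  have hle : p.1 ≤ q.1 := hpq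
  omega

/-- a monotone function is characterized by the value-interval condition -/
lemma mword_eq_iff (hk : 0 < k) (μ : Fin k → ℕ) {n : ℕ} (hsum : ∑ j, μ j = n)
    (p : Fin n) (j : Fin k) :
    mword hk μ n p = j ↔ Apar μ j.1 ≤ p.1 ∧ p.1 < Apar μ (j.1 + 1) := by
  constructor
  · rintro rfl; exact mword_spec hk μ hsum p
  · intro hj
    exact Fin.ext (interval_unique μ (mword_spec hk μ hsum p) hj)

/-- cardinality of a val-interval in `Fin n` -/
lemma card_val_interval {n : ℕ} {a b : ℕ} (hb : b ≤ n) :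
    (Finset.univ.filter fun p : Fin n => a ≤ p.1 ∧ p.1 < b).card = b - a := by
  rw [← Nat.card_Ico a b, ← Finset.card_image_of_injective
    (Finset.univ.filter fun p : Fin n => a ≤ p.1 ∧ p.1 < b) Fin.val_injective]
  congr 1
  ext m
  simp only [Finset.mem_image, Finset.mem_filter, Finset.mem_univ, true_and, Finset.mem_Ico]
  constructor
  · rintro ⟨p, hp, rfl⟩; exact hp
  · rintro ⟨h1, h2⟩; exact ⟨⟨m, by omega⟩, ⟨h1, h2⟩, rfl⟩

lemma cont_mword (hk : 0 < k) (μ : Fin k → ℕ) {n : ℕ} (hsum : ∑ j, μ j = n) :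
    cont (mword hk μ n) = μ := by
  funext j
  rw [cont]
  have : (Finset.univ.filter fun p : Fin n => mword hk μ n p = j)
      = Finset.univ.filter fun p : Fin n => Apar μ j.1 ≤ p.1 ∧ p.1 < Apar μ (j.1 + 1) := by
    ext p
    simp only [Finset.mem_filter, Finset.mem_univ, true_and]
    exact mword_eq_iff hk μ hsum p j
  have hb : Apar μ (j.1 + 1) ≤ n := by
    have h1 : Apar μ (j.1 + 1) ≤ Apar μ k := Apar_mono μ j.2
    rwa [Apar_of_ge μ (le_refl k), hsum] at h1
  rw [this, card_val_interval hb, Apar_succ μ j]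
  omega

/-- filter-card of values `< m` for an arbitrary coloring equals the partial sum of its content -/
lemma card_lt_eq_Apar {n : ℕ} (c : Fin n → Fin k) (m : ℕ) :
    (Finset.univ.filter fun p : Fin n => (c p).1 < m).card = Apar (cont c) m := by
  rw [Apar, Finset.card_eq_sum_card_fiberwise
    (f := c) (t := Finset.univ.filter (fun j : Fin k => (j : ℕ) < m))
    (fun p hp => by simp at hp ⊢; exact hp)]
  refine Finset.sum_congr rfl fun j hj => ?_
  simp only [Finset.mem_filter, Finset.mem_univ, true_and] at hj
  rw [cont]
  congr 1
  ext p
  simp only [Finset.mem_filter, Finset.mem_univ, true_and]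
  constructor
  · rintro ⟨_, h⟩; exact h
  · rintro rfl; exact ⟨hj, rfl⟩

/-- for a monotone coloring, membership below `j` is an initial segment -/
lemma monotone_lt_iff {n : ℕ} {c : Fin n → Fin k} (hc : Monotone c) (p : Fin n) (j : Fin k) :
    c p < j ↔ p.1 < (Finset.univ.filter fun q : Fin n => c q < j).card := by
  constructor
  · intro h
    have hsub : Finset.Iic p ⊆ Finset.univ.filter fun q : Fin n => c q < j := by
      intro q hq
      simp only [Finset.mem_Iic] at hq
      simp only [Finset.mem_filter, Finset.mem_univ, true_and]
      exact lt_of_le_of_lt (hc hq) h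
    have := Finset.card_le_card hsub
    rw [Fin.card_Iic] at this
    omega
  · intro h
    by_contra hcon
    have hsub : (Finset.univ.filter fun q : Fin n => c q < j) ⊆ Finset.Iio p := by
      intro q hq
      simp only [Finset.mem_filter, Finset.mem_univ, true_and] at hq
      simp only [Finset.mem_Iio]
      by_contra hq2
      exact hcon (lt_of_le_of_lt (hc (le_of_not_gt hq2)) hq)
    have := Finset.card_le_card hsub
    rw [Fin.card_Iio] at this
    omega

lemma monotone_eq_mword (hk : 0 < k) {n : ℕ} {c : Fin n → Fin k} (hc : Monotone c) :
    c = mword hk (cont c) n := by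
  have hsum : ∑ j, cont c j = n := by
    have := cont_mem_antidiagonalTuple c
    rwa [Finset.Nat.mem_antidiagonalTuple] at this
  have key : ∀ (p : Fin n) (j : Fin k), c p < j ↔ p.1 < Apar (cont c) j.1 := by
    intro p j
    rw [monotone_lt_iff hc p j]
    rw [Finset.filter_congr (fun q _ => show (c q < j) ↔ ((c q).1 < j.1) from Iff.rfl),
      card_lt_eq_Apar]
  have key2 : ∀ (p : Fin n) (j : Fin k), mword hk (cont c) n p < j ↔ p.1 < Apar (cont c) j.1 := by
    intro p j
    rw [monotone_lt_iff (mword_monotone hk _ hsum) p j]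
    rw [Finset.filter_congr (fun q _ =>
        show (mword hk (cont c) n q < j) ↔ ((mword hk (cont c) n q).1 < j.1) from Iff.rfl),
      card_lt_eq_Apar, cont_mword hk _ hsum]
  funext p
  refine le_antisymm (not_lt.1 fun h => ?_) (not_lt.1 fun h => ?_)
  · exact lt_irrefl _ ((key p _).2 ((key2 p (c p)).1 h))
  · exact lt_irrefl _ ((key2 p _).2 ((key p (mword hk (cont c) n p)).1 h))

lemma hsymm_eq_sum_monotone (hk : 0 < k) (n : ℕ) :
    hsymmPoly k n = ∑ c ∈ Finset.univ.filter (fun c : Fin n → Fin k => Monotone c), wgt c := by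
  rw [hsymmPoly]
  refine Finset.sum_nbij' (fun μ => mword hk μ n) (fun c => cont c) ?_ ?_ ?_ ?_ ?_
  · intro μ hμ
    rw [Finset.Nat.mem_antidiagonalTuple] at hμ
    simp only [Finset.mem_filter, Finset.mem_univ, true_and]
    exact mword_monotone hk μ hμ
  · intro c _
    exact cont_mem_antidiagonalTuple c
  · intro μ hμ
    rw [Finset.Nat.mem_antidiagonalTuple] at hμ
    exact cont_mword hk μ hμ
  · intro c hc
    simp only [Finset.mem_filter, Finset.mem_univ, true_and] at hc
    exact (monotone_eq_mword hk hc).symm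
  · intro μ hμ
    rw [Finset.Nat.mem_antidiagonalTuple] at hμ
    rw [← prod_pow_cont (mword hk μ n), cont_mword hk μ hμ]

end Two

variable (k) in
/-- valid split at `t`: the first `t` positions are all ascents, no ascent afterwards. -/
def validT {n : ℕ} (t : ℕ) (w : Equiv.Perm (Fin n) × (Fin n → Fin k)) : Prop :=
  (∀ i (h : i + 1 < n), i + 1 < t → AscI w.1 w.2 i h) ∧
  (∀ i (h : i + 1 < n), t ≤ i → ¬ AscI w.1 w.2 i h)

noncomputable def BPoly (k n t : ℕ) : MvPolynomial (Fin k) ℚ :=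
  ∑ w ∈ Finset.univ.filter
    (fun w : Equiv.Perm (Fin n) × (Fin n → Fin k) => validT k t w), wgt w.2

section Involution

variable {n : ℕ} (w : Equiv.Perm (Fin n) × (Fin n → Fin k))

lemma valid_consec {t t' : ℕ} (ht' : t' ≤ n) (hv : validT k t w) (hv' : validT k t' w)
    (h : t < t') : t' = t + 1 := by
  by_contra hne
  have h2 : t + 1 < t' := by omega
  have hlt : t + 1 < n := by omega
  exact hv.2 t hlt (le_refl t) (hv'.1 t hlt h2)

lemma valid_nbr {t : ℕ} (hn : n ≠ 0) (ht : t ≤ n) (hv : validT k t w) :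
    (t + 1 ≤ n ∧ validT k (t + 1) w) ∨ (1 ≤ t ∧ validT k (t - 1) w) := by
  rcases Nat.eq_zero_or_pos t with rfl | htpos
  · left
    refine ⟨by omega, fun i h hi => by omega, fun i h hi => hv.2 i h (by omega)⟩
  rcases eq_or_lt_of_le ht with rfl | htn
  · right
    refine ⟨htpos, fun i h hi => hv.1 i h (by omega), fun i h hi => by omega⟩
  · -- 1 ≤ t < n
    have hbd : (t - 1) + 1 < n := by omega
    by_cases ha : AscI w.1 w.2 (t - 1) hbd
    · left
      refine ⟨by omega, fun i h hi => ?_, fun i h hi => hv.2 i h (by omega)⟩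
      rcases Nat.lt_or_ge (i + 1) t with h2 | h2
      · exact hv.1 i h h2
      · have : i = t - 1 := by omega
        subst this
        exact ha
    · right
      refine ⟨htpos, fun i h hi => hv.1 i h (by omega), fun i h hi => ?_⟩
      rcases Nat.lt_or_ge i t with h2 | h2
      · have : i = t - 1 := by omega
        subst this
        exact ha
      · exact hv.2 i h h2

lemma signs_sum_zero (hn : n ≠ 0) :
    ∑ t ∈ (Finset.range (n + 1)).filter (fun t => validT k t w), (-1 : ℚ) ^ t = 0 := by
  set V := (Finset.range (n + 1)).filter (fun t => validT k t w) with hV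
  have memV : ∀ {t}, t ∈ V ↔ (t ≤ n ∧ validT k t w) := by
    intro t
    simp only [hV, Finset.mem_filter, Finset.mem_range]
    constructor
    · rintro ⟨h1, h2⟩; exact ⟨by omega, h2⟩
    · rintro ⟨h1, h2⟩; exact ⟨by omega, h2⟩
  have hnbr : ∀ t, t ∈ V → (t + 1 ∈ V ∨ (1 ≤ t ∧ t - 1 ∈ V)) := by
    intro t htV
    rcases memV.1 htV with ⟨ht, hv⟩
    rcases valid_nbr w hn ht hv with ⟨h1, h2⟩ | ⟨h1, h2⟩
    · exact Or.inl (memV.2 ⟨h1, h2⟩)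
    · exact Or.inr ⟨h1, memV.2 ⟨by omega, h2⟩⟩
  have hcons : ∀ t t', t ∈ V → t' ∈ V → t < t' → t' = t + 1 := by
    intro t t' h1 h2 hlt
    exact valid_consec w (memV.1 h2).1 (memV.1 h1).2 (memV.1 h2).2 hlt
  refine Finset.sum_involution
    (fun t _ => if t + 1 ∈ V then t + 1 else t - 1) ?_ ?_ ?_ ?_
  · intro t ht
    by_cases h : t + 1 ∈ V
    · simp only [h, if_true]
      rw [pow_succ]
      ring
    · simp only [h, if_false]
      have h1 : 1 ≤ t := by
        rcases hnbr t ht with h2 | h2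
        · exact absurd h2 h
        · exact h2.1
      obtain ⟨s, rfl⟩ := Nat.exists_eq_add_of_le h1
      have hs : 1 + s - 1 = s := by omega
      have h2 : (-1 : ℚ) ^ (1 + s) = -(-1 : ℚ) ^ (1 + s - 1) := by
        rw [hs, pow_add]; ring
      rw [h2]
      ring
  · intro t ht _
    by_cases h : t + 1 ∈ V
    · simp only [h, if_true]
      omega
    · simp only [h, if_false]
      have h1 : 1 ≤ t := by
        rcases hnbr t ht with h2 | h2
        · exact absurd h2 h
        · exact h2.1
      omega
  · intro t ht
    by_cases h : t + 1 ∈ V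
    · simp only [h, if_true]
    · simp only [h, if_false]
      rcases hnbr t ht with h2 | h2
      · exact absurd h2 h
      · exact h2.2
  · intro t ht
    by_cases h : t + 1 ∈ V
    · simp only [h, if_true]
      have h2 : t + 1 + 1 ∉ V := by
        intro hc
        have := hcons t (t + 2) ht hc (by omega)
        omega
      simp only [h2, if_false]
      omega
    · simp only [h, if_false]
      have h1 : 1 ≤ t ∧ t - 1 ∈ V := by
        rcases hnbr t ht with h2 | h2
        · exact absurd h2 h
        · exact h2
      have h3 : t - 1 + 1 ∈ V := by
        have : t - 1 + 1 = t := by omega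
        rw [this]
        exact ht
      simp only [h3, if_true]
      omega

end Involution

lemma BPoly_zero : BPoly k 0 0 = 1 := by
  rw [BPoly]
  have h1 : ∀ w : Equiv.Perm (Fin 0) × (Fin 0 → Fin k), validT k 0 w :=
    fun w => ⟨fun i h _ => by omega, fun i h _ => by omega⟩
  rw [Finset.filter_true_of_mem (fun w _ => h1 w)]
  have h2 : ∀ w : Equiv.Perm (Fin 0) × (Fin 0 → Fin k), wgt w.2 = 1 := by
    intro w
    rw [wgt]
    exact Finset.prod_of_isEmpty _
  rw [Finset.sum_congr rfl (fun w _ => h2 w), Finset.sum_const, Finset.card_univ]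
  simp

lemma sum_BPoly (n : ℕ) :
    ∑ t ∈ Finset.range (n + 1), (-1 : ℚ) ^ t • BPoly k n t
      = if n = 0 then 1 else 0 := by
  rcases eq_or_ne n 0 with rfl | hn
  · simp [BPoly_zero]
  · simp only [hn, if_false]
    simp only [BPoly, Finset.smul_sum]
    have hcomm : ∀ (t : ℕ) (w : Equiv.Perm (Fin n) × (Fin n → Fin k)),
        t ∈ Finset.range (n + 1) ∧ w ∈ Finset.univ.filter (fun w => validT k t w) ↔
        t ∈ (Finset.range (n + 1)).filter (fun t => validT k t w) ∧ w ∈ Finset.univ := by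
      intro t w
      simp only [Finset.mem_filter, Finset.mem_univ, true_and, and_true]
    rw [Finset.sum_comm' hcomm]
    refine Finset.sum_eq_zero fun w _ => ?_
    rw [← Finset.sum_smul, signs_sum_zero w hn, zero_smul]

section Consec

variable {m : ℕ} {α : Type*} [Preorder α] {f : Fin m → α}

lemma strictMono_of_consec
    (h : ∀ i (hi : i + 1 < m), f ⟨i, Nat.lt_of_succ_lt hi⟩ < f ⟨i + 1, hi⟩) :
    StrictMono f := by
  have key : ∀ d (p q : Fin m), q.1 = p.1 + d + 1 → f p < f q := by
    intro d
    induction d with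
    | zero =>
      intro p q hq
      have h1 : p.1 + 1 < m := by have := q.2; omega
      have hp : p = ⟨p.1, Nat.lt_of_succ_lt h1⟩ := Fin.ext rfl
      have hq2 : q = ⟨p.1 + 1, h1⟩ := Fin.ext (show q.1 = p.1 + 1 by omega)
      rw [hp, hq2]
      exact h p.1 h1
    | succ d ih =>
      intro p q hq
      have h1 : p.1 + d + 1 < m := by have := q.2; omega
      have h2 : p.1 + d + 1 + 1 < m := by have := q.2; omega
      refine lt_trans (ih p ⟨p.1 + d + 1, h1⟩ rfl) ?_
      have hq2 : q = ⟨p.1 + d + 1 + 1, h2⟩ := Fin.ext (show q.1 = p.1 + d + 1 + 1 by omega)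
      rw [hq2]
      exact h (p.1 + d + 1) h2
  intro p q hpq
  have hlt : p.1 < q.1 := hpq
  exact key (q.1 - p.1 - 1) p q (by omega)

lemma monotone_of_consec
    (h : ∀ i (hi : i + 1 < m), f ⟨i, Nat.lt_of_succ_lt hi⟩ ≤ f ⟨i + 1, hi⟩) :
    Monotone f := by
  have key : ∀ d (p q : Fin m), q.1 = p.1 + d → f p ≤ f q := by
    intro d
    induction d with
    | zero =>
      intro p q hq
      have : p = q := Fin.ext (by omega)
      rw [this]
    | succ d ih =>
      intro p q hq
      have h1 : p.1 + d < m := by have := q.2; omega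
      have h2 : p.1 + d + 1 < m := by have := q.2; omega
      refine le_trans (ih p ⟨p.1 + d, h1⟩ rfl) ?_
      have hq2 : q = ⟨p.1 + d + 1, h2⟩ := Fin.ext (show q.1 = p.1 + d + 1 by omega)
      rw [hq2]
      exact h (p.1 + d) h2
  intro p q hpq
  have hle : p.1 ≤ q.1 := hpq
  exact key (q.1 - p.1) p q (by omega)

end Consec

lemma oio_symm_apply_coe {α : Type*} [LinearOrder α] (s : Finset α) {m : ℕ} (h : s.card = m)
    (v : Fin m) (pf : ((s.orderIsoOfFin h v : α)) ∈ s) :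
    (s.orderIsoOfFin h).symm ⟨(s.orderIsoOfFin h v : α), pf⟩ = v := by
  have h2 : (⟨(s.orderIsoOfFin h v : α), pf⟩ : ↥s) = s.orderIsoOfFin h v := Subtype.ext rfl
  rw [h2, OrderIso.symm_apply_apply]

lemma compl_card {n t : ℕ} (S : Finset (Fin n)) (hS : S.card = t) : Sᶜ.card = n - t := by
  rw [Finset.card_compl, hS, Fintype.card_fin]

section Recon

variable {k : ℕ} {n t : ℕ} (S : Finset (Fin n)) (hS : S.card = t)

/-- the permutation underlying the reconstruction -/
noncomputable def reconF (w0 : Equiv.Perm (Fin (n - t)) × (Fin (n - t) → Fin k)) :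
    Fin n → Fin n := fun p =>
  if h : p.1 < t then (S.orderIsoOfFin hS ⟨p.1, h⟩ : Fin n)
  else (Sᶜ.orderIsoOfFin (compl_card S hS) (w0.1 ⟨p.1 - t, by have := p.2; omega⟩) : Fin n)

lemma reconF_inj (w0 : Equiv.Perm (Fin (n - t)) × (Fin (n - t) → Fin k)) :
    Function.Injective (reconF S hS w0) := by
  intro a b hab
  simp only [reconF] at hab
  by_cases ha : a.1 < t <;> by_cases hb : b.1 < t <;>
    simp only [ha, hb, dif_pos, dif_neg, not_false_iff] at hab
  · have h2 := (S.orderIsoOfFin hS).injective (Subtype.coe_injective hab)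
    rw [Fin.mk.injEq] at h2
    exact Fin.ext h2
  · exfalso
    have h1 : (S.orderIsoOfFin hS ⟨a.1, ha⟩ : Fin n) ∈ S := (S.orderIsoOfFin hS ⟨a.1, ha⟩).2
    have h2 := (Sᶜ.orderIsoOfFin (compl_card S hS)
      (w0.1 ⟨b.1 - t, by have := b.2; omega⟩)).2
    rw [← hab, Finset.mem_compl] at h2
    exact h2 h1
  · exfalso
    have h1 : (S.orderIsoOfFin hS ⟨b.1, hb⟩ : Fin n) ∈ S := (S.orderIsoOfFin hS ⟨b.1, hb⟩).2
    have h2 := (Sᶜ.orderIsoOfFin (compl_card S hS)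
      (w0.1 ⟨a.1 - t, by have := a.2; omega⟩)).2
    rw [hab, Finset.mem_compl] at h2
    exact h2 h1
  · have h2 := (Sᶜ.orderIsoOfFin (compl_card S hS)).injective (Subtype.coe_injective hab)
    have h3 := w0.1.injective h2
    rw [Fin.mk.injEq] at h3
    exact Fin.ext (by omega)

/-- reconstruction of a colored permutation from a prefix/suffix splitting -/
noncomputable def recon (cp : Fin t → Fin k)
    (w0 : Equiv.Perm (Fin (n - t)) × (Fin (n - t) → Fin k)) :
    Equiv.Perm (Fin n) × (Fin n → Fin k) :=
  (Equiv.ofBijective (reconF S hS w0)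
      ((Finite.injective_iff_bijective).1 (reconF_inj S hS w0)),
   fun v => if h : v ∈ S then cp ((S.orderIsoOfFin hS).symm ⟨v, h⟩)
     else w0.2 ((Sᶜ.orderIsoOfFin (compl_card S hS)).symm ⟨v, Finset.mem_compl.2 h⟩))

variable (cp : Fin t → Fin k) (w0 : Equiv.Perm (Fin (n - t)) × (Fin (n - t) → Fin k))

lemma recon_fst_lt (p : Fin n) (h : p.1 < t) :
    (recon S hS cp w0).1 p = (S.orderIsoOfFin hS ⟨p.1, h⟩ : Fin n) := by
  have h1 : (recon S hS cp w0).1 p = reconF S hS w0 p := rfl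
  rw [h1, reconF]
  exact dif_pos h

lemma recon_fst_ge (p : Fin n) (h : ¬ p.1 < t) :
    (recon S hS cp w0).1 p
      = (Sᶜ.orderIsoOfFin (compl_card S hS) (w0.1 ⟨p.1 - t, by have := p.2; omega⟩) : Fin n) := by
  have h1 : (recon S hS cp w0).1 p = reconF S hS w0 p := rfl
  rw [h1, reconF]
  exact dif_neg h

lemma recon_snd_mem (v : Fin n) (h : v ∈ S) :
    (recon S hS cp w0).2 v = cp ((S.orderIsoOfFin hS).symm ⟨v, h⟩) := dif_pos h

lemma recon_snd_not (v : Fin n) (h : v ∉ S) :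
    (recon S hS cp w0).2 v
      = w0.2 ((Sᶜ.orderIsoOfFin (compl_card S hS)).symm ⟨v, Finset.mem_compl.2 h⟩) := dif_neg h

end Recon

section Bij

variable {k : ℕ} {n t : ℕ}

lemma recon_valid (ht : t ≤ n) (S : Finset (Fin n)) (hS : S.card = t)
    (cp : Fin t → Fin k) (hcp : Monotone cp)
    (w0 : Equiv.Perm (Fin (n - t)) × (Fin (n - t) → Fin k)) (hw0 : ¬ HasAscent w0.1 w0.2) :
    validT k t (recon S hS cp w0) := by
  constructor
  · intro i h hit
    have hi : i < t := by omega
    constructor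
    · rw [recon_fst_lt S hS cp w0 ⟨i, Nat.lt_of_succ_lt h⟩ hi,
        recon_fst_lt S hS cp w0 ⟨i + 1, h⟩ hit]
      refine Subtype.coe_lt_coe.2 ((S.orderIsoOfFin hS).lt_iff_lt.2 ?_)
      exact Fin.mk_lt_mk.2 (Nat.lt_succ_self i)
    · rw [recon_fst_lt S hS cp w0 ⟨i, Nat.lt_of_succ_lt h⟩ hi,
        recon_fst_lt S hS cp w0 ⟨i + 1, h⟩ hit,
        recon_snd_mem S hS cp w0 _ (S.orderIsoOfFin hS ⟨i, hi⟩).2,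
        recon_snd_mem S hS cp w0 _ (S.orderIsoOfFin hS ⟨i + 1, hit⟩).2,
        oio_symm_apply_coe S hS, oio_symm_apply_coe S hS]
      exact hcp (Fin.mk_le_mk.2 (by omega))
  · intro i h hti hasc
    obtain ⟨hlt, hle⟩ := hasc
    have hi : ¬ (i : ℕ) < t := by omega
    have hi1 : ¬ (i + 1 : ℕ) < t := by omega
    rw [recon_fst_ge S hS cp w0 ⟨i, Nat.lt_of_succ_lt h⟩ hi,
      recon_fst_ge S hS cp w0 ⟨i + 1, h⟩ hi1] at hlt hle
    rw [recon_snd_not S hS cp w0 _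
        (Finset.mem_compl.1 (Sᶜ.orderIsoOfFin (compl_card S hS) _).2),
      recon_snd_not S hS cp w0 _
        (Finset.mem_compl.1 (Sᶜ.orderIsoOfFin (compl_card S hS) _).2),
      oio_symm_apply_coe Sᶜ (compl_card S hS), oio_symm_apply_coe Sᶜ (compl_card S hS)] at hle
    have hlt2 := (Sᶜ.orderIsoOfFin (compl_card S hS)).lt_iff_lt.1 (Subtype.coe_lt_coe.1 hlt)
    have hbd : (i - t) + 1 < n - t := by omega
    apply hw0
    refine ⟨i - t, hbd, ?_, ?_⟩
    · have he : (⟨(i : ℕ) + 1 - t, by omega⟩ : Fin (n - t))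
          = ⟨(i - t) + 1, hbd⟩ := Fin.ext (by simp; omega)
      rw [← he]
      exact hlt2
    · have he : (⟨(i : ℕ) + 1 - t, by omega⟩ : Fin (n - t))
          = ⟨(i - t) + 1, hbd⟩ := Fin.ext (by simp; omega)
      rw [← he]
      exact hle

lemma recon_inj (ht : t ≤ n) {S S' : Finset (Fin n)} (hS : S.card = t) (hS' : S'.card = t)
    {cp cp' : Fin t → Fin k} {w0 w0' : Equiv.Perm (Fin (n - t)) × (Fin (n - t) → Fin k)}
    (h : recon S hS cp w0 = recon S' hS' cp' w0') : S = S' ∧ cp = cp' ∧ w0 = w0' := by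
  classical
  have hfst : ∀ p : Fin n, (recon S hS cp w0).1 p = (recon S' hS' cp' w0').1 p :=
    fun p => by rw [h]
  have hsnd : ∀ v : Fin n, (recon S hS cp w0).2 v = (recon S' hS' cp' w0').2 v :=
    fun v => by rw [h]
  have hSS : S = S' := by
    have hdir : ∀ (T T' : Finset (Fin n)) (hT : T.card = t) (hT' : T'.card = t)
        (cq : Fin t → Fin k) (cq' : Fin t → Fin k) (wq wq' : _)
        (hpq : ∀ p : Fin n, (recon T hT cq wq).1 p = (recon T' hT' cq' wq').1 p),
        T ⊆ T' := by
      intro T T' hT hT' cq cq' wq wq' hpq v hv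
      set p := (T.orderIsoOfFin hT).symm ⟨v, hv⟩ with hp
      have hpn : (p : ℕ) < n := lt_of_lt_of_le p.2 ht
      have e1 := recon_fst_lt T hT cq wq ⟨p.1, hpn⟩ p.2
      have e2 := recon_fst_lt T' hT' cq' wq' ⟨p.1, hpn⟩ p.2
      have e3 : (⟨p.1, p.2⟩ : Fin t) = p := Fin.ext rfl
      have e4 : (T.orderIsoOfFin hT) p = ⟨v, hv⟩ := by
        rw [hp, OrderIso.apply_symm_apply]
      have e5 : v = (recon T hT cq wq).1 ⟨p.1, hpn⟩ := by
        rw [e1, e3, e4]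
      rw [hpq ⟨p.1, hpn⟩, e2, e3] at e5
      rw [e5]
      exact (T'.orderIsoOfFin hT' p).2
    exact le_antisymm (hdir S S' hS hS' cp cp' w0 w0' hfst)
      (hdir S' S hS' hS cp' cp w0' w0 (fun p => (hfst p).symm))
  subst hSS
  refine ⟨rfl, ?_, ?_⟩
  · funext p
    have hv := (S.orderIsoOfFin hS p).2
    have e1 := recon_snd_mem S hS cp w0 _ hv
    have e2 := recon_snd_mem S hS' cp' w0' _ hv
    rw [oio_symm_apply_coe S hS] at e1
    rw [oio_symm_apply_coe S hS'] at e2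
    rw [← e1, ← e2]
    exact hsnd _
  · have hw1 : w0.1 = w0'.1 := by
      apply Equiv.ext
      intro q
      have hqn : t + q.1 < n := by have := q.2; omega
      have hq : ¬ (t + q.1 < t) := by omega
      have e1 := recon_fst_ge S hS cp w0 ⟨t + q.1, hqn⟩ hq
      have e2 := recon_fst_ge S hS' cp' w0' ⟨t + q.1, hqn⟩ hq
      have e3 := hfst ⟨t + q.1, hqn⟩
      rw [e1, e2] at e3
      have e4 := (Sᶜ.orderIsoOfFin (compl_card S hS)).injective (Subtype.coe_injective e3)
      have e5 : (⟨t + q.1 - t, by have := q.2; omega⟩ : Fin (n - t)) = q :=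
        Fin.ext (show t + q.1 - t = q.1 by omega)
      rw [e5] at e4
      exact e4
    have hw2 : w0.2 = w0'.2 := by
      funext v
      have hv := (Sᶜ.orderIsoOfFin (compl_card S hS) v).2
      have hv' : ((Sᶜ.orderIsoOfFin (compl_card S hS) v : Fin n)) ∉ S := Finset.mem_compl.1 hv
      have e1 := recon_snd_not S hS cp w0 _ hv'
      have e2 := recon_snd_not S hS' cp' w0' _ hv'
      rw [oio_symm_apply_coe Sᶜ (compl_card S hS)] at e1
      rw [oio_symm_apply_coe Sᶜ (compl_card S hS')] at e2
      rw [← e1, ← e2]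
      exact hsnd _
    exact Prod.ext hw1 hw2

lemma recon_surj (ht : t ≤ n) (w : Equiv.Perm (Fin n) × (Fin n → Fin k))
    (hv : validT k t w) :
    ∃ (S : Finset (Fin n)) (hS : S.card = t) (cp : Fin t → Fin k)
      (w0 : Equiv.Perm (Fin (n - t)) × (Fin (n - t) → Fin k)),
      Monotone cp ∧ ¬ HasAscent w0.1 w0.2 ∧ recon S hS cp w0 = w := by
  classical
  set pv : Fin t → Fin n := fun p => w.1 ⟨p.1, lt_of_lt_of_le p.2 ht⟩ with hpvdef
  have hpv : StrictMono pv := by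
    apply strictMono_of_consec
    intro i hi
    exact (hv.1 i (by omega) hi).1
  set S := Finset.image pv Finset.univ with hSdef
  have hS : S.card = t := by
    rw [hSdef, Finset.card_image_of_injective _ hpv.injective, Finset.card_univ,
      Fintype.card_fin]
  have hmem : ∀ x, pv x ∈ S := fun x => Finset.mem_image_of_mem pv (Finset.mem_univ x)
  have hpve : ∀ p, pv p = ((S.orderIsoOfFin hS p : Fin n)) := by
    intro p
    rw [Finset.coe_orderIsoOfFin_apply]
    exact congrFun (Finset.orderEmbOfFin_unique hS hmem hpv) p
  have hgmem : ∀ q : Fin (n - t), w.1 ⟨t + q.1, by have := q.2; omega⟩ ∈ Sᶜ := by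
    intro q
    rw [Finset.mem_compl]
    intro hcon
    obtain ⟨p, -, hp⟩ := Finset.mem_image.1 hcon
    have h2 := w.1.injective hp
    have h3 : p.1 = t + q.1 := congrArg Fin.val h2
    have := p.2
    omega
  set eC := Sᶜ.orderIsoOfFin (compl_card S hS) with heC
  have hinj : Function.Injective
      (fun q : Fin (n - t) => eC.symm ⟨w.1 ⟨t + q.1, by have := q.2; omega⟩, hgmem q⟩) := by
    intro a b hab
    have h2 := eC.symm.injective hab
    rw [Subtype.mk.injEq] at h2
    have h3 := w.1.injective h2
    rw [Fin.mk.injEq] at h3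
    exact Fin.ext (by omega)
  set σ' : Equiv.Perm (Fin (n - t)) :=
    Equiv.ofBijective _ ((Finite.injective_iff_bijective).1 hinj) with hσdef
  have hσ' : ∀ q : Fin (n - t), (eC (σ' q) : Fin n) = w.1 ⟨t + q.1, by have := q.2; omega⟩ := by
    intro q
    show (eC (eC.symm ⟨w.1 ⟨t + q.1, _⟩, hgmem q⟩) : Fin n) = _
    rw [OrderIso.apply_symm_apply]
  set cp : Fin t → Fin k := fun p => w.2 (pv p) with hcpdef
  set c0 : Fin (n - t) → Fin k := fun v => w.2 ((eC v : Fin n)) with hc0def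
  have hcp : Monotone cp := by
    apply monotone_of_consec
    intro i hi
    exact (hv.1 i (by omega) hi).2
  have hno : ¬ HasAscent σ' c0 := by
    rintro ⟨q, hq, hlt, hle⟩
    have h1 : (t + q) + 1 < n := by omega
    refine hv.2 (t + q) h1 (by omega) ⟨?_, ?_⟩
    · have h2 := Subtype.coe_lt_coe.2 ((eC.lt_iff_lt).2 hlt)
      rw [hσ', hσ'] at h2
      exact h2
    · have h2 : c0 (σ' ⟨q, Nat.lt_of_succ_lt hq⟩) = w.2 (w.1 ⟨t + q, Nat.lt_of_succ_lt h1⟩) := by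
        rw [hc0def]
        simp only
        rw [hσ' ⟨q, Nat.lt_of_succ_lt hq⟩]
      have h3 : c0 (σ' ⟨q + 1, hq⟩) = w.2 (w.1 ⟨(t + q) + 1, h1⟩) := by
        rw [hc0def]
        simp only
        rw [hσ' ⟨q + 1, hq⟩]
        exact congrArg w.2 (congrArg w.1 (Fin.ext rfl))
      rw [h2, h3] at hle
      exact hle
  refine ⟨S, hS, cp, (σ', c0), hcp, hno, ?_⟩
  have h1 : (recon S hS cp (σ', c0)).1 = w.1 := by
    apply Equiv.ext
    intro p
    by_cases hp : p.1 < t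
    · rw [recon_fst_lt S hS cp (σ', c0) p hp, ← hpve ⟨p.1, hp⟩]
    · rw [recon_fst_ge S hS cp (σ', c0) p hp]
      have h2 := hσ' ⟨p.1 - t, by have := p.2; omega⟩
      simp only at h2
      rw [h2]
      exact congrArg w.1 (Fin.ext (show t + (p.1 - t) = p.1 by omega))
  have h2 : (recon S hS cp (σ', c0)).2 = w.2 := by
    funext v
    by_cases hv2 : v ∈ S
    · rw [recon_snd_mem S hS cp (σ', c0) v hv2, hcpdef]
      simp only
      rw [hpve ((S.orderIsoOfFin hS).symm ⟨v, hv2⟩), OrderIso.apply_symm_apply]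
    · rw [recon_snd_not S hS cp (σ', c0) v hv2, hc0def]
      simp only
      rw [OrderIso.apply_symm_apply]
  exact Prod.ext h1 h2

lemma recon_wgt (S : Finset (Fin n)) (hS : S.card = t) (cp : Fin t → Fin k)
    (w0 : Equiv.Perm (Fin (n - t)) × (Fin (n - t) → Fin k)) :
    wgt ((recon S hS cp w0).2) = wgt cp * wgt w0.2 := by
  classical
  rw [wgt, ← Finset.prod_mul_prod_compl S]
  congr 1
  · rw [← Finset.prod_coe_sort,
      ← Equiv.prod_comp (S.orderIsoOfFin hS).toEquiv
        (fun x : ↥S => (X ((recon S hS cp w0).2 ↑x) : MvPolynomial (Fin k) ℚ))]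
    rw [wgt]
    refine Finset.prod_congr rfl fun p _ => ?_
    simp only [RelIso.coe_fn_toEquiv]
    rw [recon_snd_mem S hS cp w0 _ (S.orderIsoOfFin hS p).2, oio_symm_apply_coe S hS]
  · rw [← Finset.prod_coe_sort,
      ← Equiv.prod_comp (Sᶜ.orderIsoOfFin (compl_card S hS)).toEquiv
        (fun x : ↥Sᶜ => (X ((recon S hS cp w0).2 ↑x) : MvPolynomial (Fin k) ℚ))]
    rw [wgt]
    refine Finset.prod_congr rfl fun q _ => ?_
    simp only [RelIso.coe_fn_toEquiv]
    rw [recon_snd_not S hS cp w0 _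
        (Finset.mem_compl.1 (Sᶜ.orderIsoOfFin (compl_card S hS) q).2),
      oio_symm_apply_coe Sᶜ (compl_card S hS)]

lemma BPoly_eq (hk : 0 < k) (ht : t ≤ n) :
    BPoly k n t = (n.choose t) • (hsymmPoly k t * dPoly k (n - t)) := by
  classical
  have hcod : ∑ b ∈ (Finset.powersetCard t (Finset.univ : Finset (Fin n))) ×ˢ
      ((Finset.univ.filter (fun c : Fin t → Fin k => Monotone c)) ×ˢ
        (Finset.univ.filter (fun w : Equiv.Perm (Fin (n - t)) × (Fin (n - t) → Fin k) =>
          ¬ HasAscent w.1 w.2))),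
      wgt b.2.1 * wgt b.2.2.2 = (n.choose t) • (hsymmPoly k t * dPoly k (n - t)) := by
    rw [Finset.sum_product]
    have hin : ∀ S ∈ Finset.powersetCard t (Finset.univ : Finset (Fin n)),
        (∑ y ∈ (Finset.univ.filter (fun c : Fin t → Fin k => Monotone c)) ×ˢ
          (Finset.univ.filter (fun w : Equiv.Perm (Fin (n - t)) × (Fin (n - t) → Fin k) =>
            ¬ HasAscent w.1 w.2)), wgt y.1 * wgt y.2.2)
          = hsymmPoly k t * dPoly k (n - t) := by
      intro S _
      rw [Finset.sum_product, hsymm_eq_sum_monotone hk, dPoly, Finset.sum_mul_sum]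
    rw [Finset.sum_congr rfl hin, Finset.sum_const, Finset.card_powersetCard,
      Finset.card_univ, Fintype.card_fin]
  rw [BPoly, ← hcod]
  refine (Finset.sum_bij
    (fun b hb => recon b.1 (Finset.mem_powersetCard_univ.1 (Finset.mem_product.1 hb).1)
      b.2.1 b.2.2) ?_ ?_ ?_ ?_).symm
  · intro b hb
    rw [Finset.mem_filter]
    refine ⟨Finset.mem_univ _, ?_⟩
    have h1 := (Finset.mem_product.1 (Finset.mem_product.1 hb).2).1
    have h2 := (Finset.mem_product.1 (Finset.mem_product.1 hb).2).2
    rw [Finset.mem_filter] at h1 h2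
    exact recon_valid ht b.1 _ b.2.1 h1.2 b.2.2 h2.2
  · rintro ⟨S, cp0, w0⟩ h1 ⟨S', cp0', w0'⟩ h2 heq
    obtain ⟨e1, e2, e3⟩ := recon_inj ht _ _ heq
    simp only [Prod.mk.injEq]
    exact ⟨e1, e2, e3⟩
  · intro w hw
    rw [Finset.mem_filter] at hw
    obtain ⟨S, hS, cp0, w0, hmono, hno, heq⟩ := recon_surj ht w hw.2
    refine ⟨(S, (cp0, w0)), ?_, ?_⟩
    · rw [Finset.mem_product]
      constructor
      · exact Finset.mem_powersetCard_univ.2 hS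
      · rw [Finset.mem_product]
        exact ⟨Finset.mem_filter.2 ⟨Finset.mem_univ _, hmono⟩,
          Finset.mem_filter.2 ⟨Finset.mem_univ _, hno⟩⟩
    · exact heq
  · intro b hb
    exact (recon_wgt b.1 _ b.2.1 b.2.2).symm

end Bij

theorem colored_exterior_dimension_multiplicative_inverse (k : ℕ) (hk : 1 ≤ k) :
    (PowerSeries.mk fun n => ((-1 : ℚ) ^ n * (Nat.factorial n : ℚ)⁻¹) • hsymmPoly k n) *
      (PowerSeries.mk fun n => (Nat.factorial n : ℚ)⁻¹ •
        ∑ μ ∈ Finset.Nat.antidiagonalTuple k n,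
          (nincCount n k μ : MvPolynomial (Fin k) ℚ) * ∏ j : Fin k, (X j) ^ μ j) = 1 := by
  have hk0 : 0 < k := hk
  ext n
  rw [PowerSeries.coeff_mul, PowerSeries.coeff_one]
  simp only [PowerSeries.coeff_mk]
  rw [Finset.Nat.sum_antidiagonal_eq_sum_range_succ_mk]
  have hterm : ∀ i ∈ Finset.range (n + 1),
      (((-1 : ℚ) ^ i * (Nat.factorial i : ℚ)⁻¹) • hsymmPoly k i) *
        ((Nat.factorial (n - i) : ℚ)⁻¹ •
          ∑ μ ∈ Finset.Nat.antidiagonalTuple k (n - i),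
            (nincCount (n - i) k μ : MvPolynomial (Fin k) ℚ) * ∏ j : Fin k, (X j) ^ μ j)
      = (Nat.factorial n : ℚ)⁻¹ • ((-1 : ℚ) ^ i • BPoly k n i) := by
    intro i hi
    rw [Finset.mem_range] at hi
    have hin : i ≤ n := by omega
    rw [dPoly_eq, BPoly_eq hk0 hin, ← Nat.cast_smul_eq_nsmul ℚ,
      smul_mul_assoc, mul_smul_comm, smul_smul, smul_smul, smul_smul]
    congr 1
    have hfact : ((n.choose i : ℚ)) * (Nat.factorial i : ℚ) * (Nat.factorial (n - i) : ℚ)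
        = (Nat.factorial n : ℚ) := by
      exact_mod_cast congrArg (Nat.cast (R := ℚ)) (Nat.choose_mul_factorial_mul_factorial hin)
    have h1 : (Nat.factorial i : ℚ) ≠ 0 := Nat.cast_ne_zero.2 (Nat.factorial_ne_zero i)
    have h2 : (Nat.factorial (n - i) : ℚ) ≠ 0 := Nat.cast_ne_zero.2 (Nat.factorial_ne_zero _)
    have h3 : (Nat.factorial n : ℚ) ≠ 0 := Nat.cast_ne_zero.2 (Nat.factorial_ne_zero n)
    field_simp
    linear_combination (-1 : ℚ) * hfact
  rw [Finset.sum_congr rfl hterm, ← Finset.smul_sum, sum_BPoly]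
  rcases eq_or_ne n 0 with rfl | hn
  · simp
  · simp [hn]
end

section
/- For every n ≥ 0 and every weak composition μ of n, the map sending a colored permutation (σ,c) of content μ to the chain c(σ,c) is a bijection from the set 𝔖_μ of colored permutations of content μ onto the set of maximal chains of the interval [0̂, ([n],μ)] in the weighted boolean algebra B_n^w. -/
/-!
STATEMENT 6: the map (σ,c) ↦ c(σ,c) is a bijection from the colored permutations of
content μ onto the maximal chains of the interval [0̂, ([n],μ)] of B_n^w.

A weak composition (finitely supported function {1,2,…} → ℕ) is modeled by the multiset
of colors in Multiset ℕ in which color j appears μ(j) times; the correspondence preserves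
the componentwise order (Multiset.le), sizes (card), and sends e_r to {r}.  Chains are
recorded as lists of poset elements listed from bottom to top; a maximal chain of the
closed interval [x,y] is a chain from x to y in which every consecutive pair is a
covering relation (equivalently, a chain of [x,y] maximal under inclusion).
-/

/-- The weighted boolean algebra `B_n^w`. -/
@[ext] structure WSub (n : ℕ) where
  carrier : Finset (Fin n)
  wt : Multiset ℕ
  card_eq : Multiset.card wt = carrier.card

instance {n : ℕ} : PartialOrder (WSub n) where
  le p q := p.carrier ⊆ q.carrier ∧ p.wt ≤ q.wt
  le_refl p := ⟨subset_rfl, le_rfl⟩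
  le_trans a b c hab hbc := ⟨hab.1.trans hbc.1, hab.2.trans hbc.2⟩
  le_antisymm a b hab hba :=
    WSub.ext (Finset.Subset.antisymm hab.1 hba.1) (le_antisymm hab.2 hba.2)

/-- The rank-`i` element `p_i = ({σ(1),…,σ(i)}, e_{c(σ(1))} + ⋯ + e_{c(σ(i))})` of the
chain associated with the colored permutation `(σ,c)`. -/
def chainElt {n : ℕ} (σ : Equiv.Perm (Fin n)) (c : Fin n → ℕ) (i : ℕ) : WSub n :=
  ⟨(Finset.univ.filter (fun p : Fin n => (p : ℕ) < i)).image σ,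
   (Finset.univ.filter (fun p : Fin n => (p : ℕ) < i)).val.map (fun p => c (σ p)),
   by rw [Multiset.card_map, Finset.card_image_of_injective _ σ.injective]; rfl⟩

/-- The maximal chain `c(σ,c) : 0̂ = p_0 ⋖ p_1 ⋖ ⋯ ⋖ p_n = ([n],μ)` associated with a
colored permutation `(σ,c)`, as a list from bottom to top. -/
def chainOf {n : ℕ} (σ : Equiv.Perm (Fin n)) (c : Fin n → ℕ) : List (WSub n) :=
  (List.range (n + 1)).map (chainElt σ c)

/-- The content of a coloring `c` of `[n]`: the multiset of its colors. -/
def content {n : ℕ} (c : Fin n → ℕ) : Multiset ℕ := Finset.univ.val.map c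

namespace Aux
variable {n : ℕ}

lemma le_def {x y : WSub n} : x ≤ y ↔ x.carrier ⊆ y.carrier ∧ x.wt ≤ y.wt := Iff.rfl

lemma eq_of_le_of_carrier_eq {x y : WSub n} (h : x ≤ y) (hc : x.carrier = y.carrier) :
    x = y :=
  WSub.ext hc (Multiset.eq_of_le_of_card_le h.2 (by rw [x.card_eq, y.card_eq, hc]))

lemma covBy_iff {x y : WSub n} :
    x ⋖ y ↔ ∃ a ∉ x.carrier, ∃ r, y.carrier = insert a x.carrier ∧ y.wt = r ::ₘ x.wt := by
  constructor
  · rintro ⟨hlt, hmax⟩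
    obtain ⟨hle, hne⟩ := lt_iff_le_and_ne.mp hlt
    have hcne : x.carrier ≠ y.carrier := fun h => hne (eq_of_le_of_carrier_eq hle h)
    obtain ⟨a, hay, hax⟩ := Finset.exists_of_ssubset (ssubset_of_subset_of_ne hle.1 hcne)
    have hcard : x.carrier.card < y.carrier.card :=
      Finset.card_lt_card (ssubset_of_subset_of_ne hle.1 hcne)
    have hd : y.wt - x.wt ≠ 0 := by
      intro h0
      have h1 : x.wt = y.wt := by
        have := tsub_add_cancel_of_le hle.2
        rwa [h0, zero_add] at this
      have h2 := congrArg Multiset.card h1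
      rw [x.card_eq, y.card_eq] at h2
      omega
    obtain ⟨r, hr⟩ := Multiset.exists_mem_of_ne_zero hd
    set z : WSub n := ⟨insert a x.carrier, r ::ₘ x.wt, by
      rw [Multiset.card_cons, x.card_eq, Finset.card_insert_of_notMem hax]⟩ with hz
    have hxz : x < z := by
      refine lt_of_le_of_ne ⟨Finset.subset_insert _ _, Multiset.le_cons_self _ _⟩ ?_
      intro h
      apply hax
      have : x.carrier = insert a x.carrier := congrArg WSub.carrier h
      rw [this]
      exact Finset.mem_insert_self _ _
    have hzy : z ≤ y := by
      refine ⟨Finset.insert_subset hay hle.1, ?_⟩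
      show r ::ₘ x.wt ≤ y.wt
      have h1 : (r ::ₘ x.wt : Multiset ℕ) = {r} + x.wt := by
        rw [Multiset.singleton_add]
      have h2 : y.wt = (y.wt - x.wt) + x.wt := (tsub_add_cancel_of_le hle.2).symm
      rw [h1, h2]
      exact add_le_add (Multiset.singleton_le.mpr hr) le_rfl
    have hzney : z = y := by
      rcases lt_or_eq_of_le hzy with h | h
      · exact absurd h (hmax hxz)
      · exact h
    exact ⟨a, hax, r, by rw [← hzney], by rw [← hzney]⟩
  · rintro ⟨a, hax, r, hc, hw⟩
    have hxy : x < y := by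
      refine lt_of_le_of_ne ⟨by rw [hc]; exact Finset.subset_insert _ _,
        by rw [hw]; exact Multiset.le_cons_self _ _⟩ ?_
      intro h
      apply hax
      rw [h, hc]
      exact Finset.mem_insert_self _ _
    refine ⟨hxy, fun z hxz hzy => ?_⟩
    have h1 : x.carrier ⊂ z.carrier :=
      ssubset_of_subset_of_ne hxz.le.1
        (fun h => (ne_of_lt hxz) (eq_of_le_of_carrier_eq hxz.le h))
    have h2 : z.carrier = y.carrier := by
      refine Finset.eq_of_subset_of_card_le hzy.le.1 ?_
      have := Finset.card_lt_card h1
      rw [hc, Finset.card_insert_of_notMem hax]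
      omega
    exact (ne_of_lt hzy) (eq_of_le_of_carrier_eq hzy.le h2)


lemma chainElt_zero (σ : Equiv.Perm (Fin n)) (c : Fin n → ℕ) :
    chainElt σ c 0 = ⟨∅, 0, by simp⟩ := by
  apply WSub.ext <;> simp [chainElt]

lemma filter_succ {i : ℕ} (hi : i < n) :
    (Finset.univ.filter (fun p : Fin n => (p : ℕ) < i + 1)) =
      insert ⟨i, hi⟩ (Finset.univ.filter (fun p : Fin n => (p : ℕ) < i)) := by
  ext p
  simp only [Finset.mem_filter, Finset.mem_insert, Finset.mem_univ, true_and, Fin.ext_iff]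
  omega

lemma self_not_mem_filter {i : ℕ} (hi : i < n) :
    (⟨i, hi⟩ : Fin n) ∉ Finset.univ.filter (fun p : Fin n => (p : ℕ) < i) := by simp

lemma chainElt_succ_carrier (σ : Equiv.Perm (Fin n)) (c : Fin n → ℕ) {i : ℕ} (hi : i < n) :
    (chainElt σ c (i + 1)).carrier = insert (σ ⟨i, hi⟩) (chainElt σ c i).carrier := by
  simp only [chainElt, filter_succ hi, Finset.image_insert]

lemma chainElt_succ_wt (σ : Equiv.Perm (Fin n)) (c : Fin n → ℕ) {i : ℕ} (hi : i < n) :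
    (chainElt σ c (i + 1)).wt = c (σ ⟨i, hi⟩) ::ₘ (chainElt σ c i).wt := by
  simp only [chainElt, filter_succ hi]
  rw [Finset.insert_val_of_notMem (self_not_mem_filter hi), Multiset.map_cons]

lemma sigma_not_mem (σ : Equiv.Perm (Fin n)) (c : Fin n → ℕ) {i : ℕ} (hi : i < n) :
    σ ⟨i, hi⟩ ∉ (chainElt σ c i).carrier := by
  simp only [chainElt, Finset.mem_image]
  rintro ⟨p, hp, hpe⟩
  have h2 := σ.injective hpe
  rw [Finset.mem_filter] at hp
  rw [h2] at hp
  simp at hp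

lemma chainElt_covBy (σ : Equiv.Perm (Fin n)) (c : Fin n → ℕ) {i : ℕ} (hi : i < n) :
    chainElt σ c i ⋖ chainElt σ c (i + 1) := by
  rw [covBy_iff]
  exact ⟨σ ⟨i, hi⟩, sigma_not_mem σ c hi, c (σ ⟨i, hi⟩),
    chainElt_succ_carrier σ c hi, chainElt_succ_wt σ c hi⟩

lemma map_univ_val (σ : Equiv.Perm (Fin n)) :
    (Finset.univ.val.map (⇑σ) : Multiset (Fin n)) = Finset.univ.val := by
  have h := Finset.map_univ_equiv σ
  have := congrArg Finset.val h
  rwa [Finset.map_val] at this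

lemma content_comp (σ : Equiv.Perm (Fin n)) (c : Fin n → ℕ) :
    content (fun p => c (σ p)) = content c := by
  unfold _root_.content
  rw [show (Finset.univ.val.map fun p => c (σ p)) = (Finset.univ.val.map (⇑σ)).map c by
    rw [Multiset.map_map]; rfl, map_univ_val]

lemma chainElt_last (σ : Equiv.Perm (Fin n)) (c : Fin n → ℕ) :
    chainElt σ c n = ⟨Finset.univ, content c, by simp [content]⟩ := by
  have hf : (Finset.univ.filter (fun p : Fin n => (p : ℕ) < n)) = Finset.univ := by
    ext p; simp [p.isLt]
  apply WSub.ext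
  · simp only [chainElt, hf]
    ext x
    simp only [Finset.mem_image, Finset.mem_univ, iff_true]
    exact ⟨σ.symm x, trivial, by simp⟩
  · simp only [chainElt, hf]
    rw [← content_comp σ c]; rfl

lemma chainOf_length (σ : Equiv.Perm (Fin n)) (c : Fin n → ℕ) :
    (chainOf σ c).length = n + 1 := by simp [chainOf]

lemma chainOf_get (σ : Equiv.Perm (Fin n)) (c : Fin n → ℕ) {i : ℕ}
    (h : i < (chainOf σ c).length) : (chainOf σ c)[i] = chainElt σ c i := by
  simp [chainOf]

lemma chainOf_chain' (σ : Equiv.Perm (Fin n)) (c : Fin n → ℕ) :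
    (chainOf σ c).Chain' (· ⋖ ·) := by
  rw [chainOf]
  change List.IsChain _ _
  rw [List.isChain_map]
  rw [show n + 1 = Nat.succ n from rfl, List.isChain_range_succ]
  exact fun m hm => chainElt_covBy σ c hm

lemma chainOf_head (σ : Equiv.Perm (Fin n)) (c : Fin n → ℕ) :
    (chainOf σ c).head? = some (⟨∅, 0, by simp⟩ : WSub n) := by
  rw [chainOf, List.head?_map, List.range_succ_eq_map]
  simp [chainElt_zero]

lemma chainOf_getLast (σ : Equiv.Perm (Fin n)) (c : Fin n → ℕ) :
    (chainOf σ c).getLast? = some (chainElt σ c n) := by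
  rw [chainOf, List.range_succ, List.map_append]
  simp

lemma cons_left_cancel {a b : ℕ} {s : Multiset ℕ} (h : a ::ₘ s = b ::ₘ s) : a = b := by
  by_contra hne
  have h1 := congrArg (Multiset.count a) h
  rw [Multiset.count_cons, Multiset.count_cons, if_pos rfl, if_neg hne] at h1
  omega

lemma chainOf_inj {σ σ' : Equiv.Perm (Fin n)} {c c' : Fin n → ℕ}
    (h : chainOf σ c = chainOf σ' c') : σ = σ' ∧ c = c' := by
  have hElt : ∀ i : ℕ, i < n + 1 → chainElt σ c i = chainElt σ' c' i := by
    intro i hi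
    have h1 : (chainOf σ c)[i]'(by rw [chainOf_length]; omega) =
        (chainOf σ' c')[i]'(by rw [chainOf_length]; omega) := by simp_rw [h]
    rwa [chainOf_get, chainOf_get] at h1
  have hσ : ∀ x : Fin n, σ x = σ' x := by
    intro x
    have hi : (x : ℕ) < n := x.isLt
    have e1 := congrArg WSub.carrier (hElt ((x : ℕ) + 1) (by omega))
    have e0 := congrArg WSub.carrier (hElt x (by omega))
    rw [chainElt_succ_carrier σ c hi, chainElt_succ_carrier σ' c' hi, ← e0] at e1
    have hmem : σ ⟨(x : ℕ), hi⟩ ∈ insert (σ' ⟨(x : ℕ), hi⟩) (chainElt σ c x).carrier := by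
      rw [← e1]; exact Finset.mem_insert_self _ _
    rcases Finset.mem_insert.mp hmem with h2 | h2
    · simpa [Fin.eta] using h2
    · exact absurd h2 (sigma_not_mem σ c hi)
  have hσσ : σ = σ' := Equiv.ext hσ
  refine ⟨hσσ, ?_⟩
  funext x
  set i : Fin n := σ.symm x with hidef
  have hi : (i : ℕ) < n := i.isLt
  have e1 := congrArg WSub.wt (hElt ((i : ℕ) + 1) (by omega))
  have e0 := congrArg WSub.wt (hElt i (by omega))
  rw [chainElt_succ_wt σ c hi, chainElt_succ_wt σ' c' hi, ← e0] at e1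
  have hcc := cons_left_cancel e1
  have hx : σ ⟨(i : ℕ), hi⟩ = x := by
    rw [Fin.eta]; exact σ.apply_symm_apply x
  rw [hx] at hcc
  rw [hcc, ← hσσ, hx]

lemma chainOf_surj (μ : Multiset ℕ) (hμ : Multiset.card μ = n) (L : List (WSub n))
    (hch : L.Chain' (· ⋖ ·)) (hhd : L.head? = some ⟨∅, 0, by simp⟩)
    (hlast : L.getLast? = some ⟨Finset.univ, μ, by simp [hμ]⟩) :
    ∃ σ : Equiv.Perm (Fin n), ∃ c : Fin n → ℕ, content c = μ ∧ chainOf σ c = L := by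
  have hne : L ≠ [] := by intro h; rw [h] at hhd; simp at hhd
  have hlen0 : 0 < L.length := List.length_pos_iff.mpr hne
  set bot : WSub n := ⟨∅, 0, by simp⟩ with hbot
  set g : ℕ → WSub n := fun i => L.getD i bot with hg
  have hg0 : g 0 = bot := by
    rw [List.head?_eq_getElem?, List.getElem?_eq_getElem hlen0] at hhd
    simp only [hg, List.getD_eq_getElem L bot hlen0]
    exact Option.some_injective _ hhd
  have hcov : ∀ i, i + 1 < L.length → g i ⋖ g (i + 1) := by
    intro i hi
    have h1 := List.isChain_iff_getElem.mp hch i (by omega)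
    simpa only [hg, List.getD_eq_getElem L bot (by omega : i < L.length),
      List.getD_eq_getElem L bot hi] using h1
  have hcard : ∀ i, i < L.length → (g i).carrier.card = i := by
    intro i
    induction i with
    | zero => intro _; rw [hg0]; simp [hbot]
    | succ k ih =>
      intro hk
      obtain ⟨a, ha, r, hcar, -⟩ := covBy_iff.mp (hcov k hk)
      rw [hcar, Finset.card_insert_of_notMem ha, ih (by omega)]
  have hgtop' : g (L.length - 1) = ⟨Finset.univ, μ, by simp [hμ]⟩ := by
    rw [List.getLast?_eq_getElem?, List.getElem?_eq_getElem (by omega)] at hlast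
    simp only [hg, List.getD_eq_getElem L bot (by omega : L.length - 1 < L.length)]
    exact Option.some_injective _ hlast
  have hlenL : L.length = n + 1 := by
    have h1 := hcard (L.length - 1) (by omega)
    rw [hgtop'] at h1
    simp only [Finset.card_univ, Fintype.card_fin] at h1
    omega
  have hgtop : g n = ⟨Finset.univ, μ, by simp [hμ]⟩ := by
    rw [← hgtop']
    congr 1
    omega
  have hstep : ∀ i : Fin n, ∃ a ∉ (g i).carrier, ∃ r,
      (g ((i : ℕ) + 1)).carrier = insert a (g i).carrier ∧
      (g ((i : ℕ) + 1)).wt = r ::ₘ (g i).wt :=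
    fun i => covBy_iff.mp (hcov i (by omega))
  choose f hf r hcar hwt using hstep
  have hmono : ∀ i j : ℕ, i ≤ j → j ≤ n → (g i).carrier ⊆ (g j).carrier := by
    intro i j hij hj
    induction j with
    | zero =>
      have h0 : i = 0 := Nat.le_zero.mp hij
      exact subset_of_eq (congrArg (fun t => (g t).carrier) h0)
    | succ k ih =>
      rcases Nat.eq_or_lt_of_le hij with h | h
      · exact subset_of_eq (congrArg (fun t => (g t).carrier) h)
      · refine (ih (by omega) (by omega)).trans ?_
        have h2 := hcar ⟨k, by omega⟩
        simp only at h2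
        rw [h2]
        exact Finset.subset_insert _ _
  have key : ∀ i j : Fin n, (i : ℕ) < (j : ℕ) → f i ≠ f j := by
    intro i j h hfe
    have h1 : f i ∈ (g ((i : ℕ) + 1)).carrier := by
      rw [hcar i]; exact Finset.mem_insert_self _ _
    have h2 : (g ((i : ℕ) + 1)).carrier ⊆ (g (j : ℕ)).carrier :=
      hmono _ _ (by omega) (by omega)
    exact hf j (hfe ▸ h2 h1)
  have hfinj : Function.Injective f := by
    intro i j hij
    by_contra hne
    rcases lt_trichotomy (i : ℕ) (j : ℕ) with h | h | h
    · exact key i j h hij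
    · exact hne (Fin.ext h)
    · exact key j i h hij.symm
  set σ : Equiv.Perm (Fin n) := Equiv.ofBijective f (Finite.injective_iff_bijective.mp hfinj)
    with hσdef
  set c : Fin n → ℕ := fun x => r (σ.symm x) with hcdef
  have hfσ : ∀ i : Fin n, σ i = f i := fun i => rfl
  have hc : ∀ i : Fin n, c (f i) = r i := by
    intro i
    show r (σ.symm (f i)) = r i
    rw [← hfσ i, Equiv.symm_apply_apply]
  have hmain : ∀ i, i ≤ n → chainElt σ c i = g i := by
    intro i
    induction i with
    | zero => intro _; rw [chainElt_zero, hg0]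
    | succ k ih =>
      intro hk
      have hk' : k < n := by omega
      apply WSub.ext
      · rw [chainElt_succ_carrier σ c hk', ih (by omega), hfσ ⟨k, hk'⟩]
        exact (hcar ⟨k, hk'⟩).symm
      · rw [chainElt_succ_wt σ c hk', ih (by omega), hfσ ⟨k, hk'⟩, hc ⟨k, hk'⟩]
        exact (hwt ⟨k, hk'⟩).symm
  have hL : chainOf σ c = L := by
    refine List.ext_getElem (by rw [chainOf_length, hlenL]) ?_
    intro i h1 h2
    rw [chainOf_get, hmain i (by rw [chainOf_length] at h1; omega),
      ← List.getD_eq_getElem L bot h2]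
  refine ⟨σ, c, ?_, hL⟩
  have h1 := congrArg WSub.wt (hmain n le_rfl)
  rw [chainElt_last, hgtop] at h1
  exact h1

end Aux

theorem colored_permutations_biject_with_maximal_chains (n : ℕ) (μ : Multiset ℕ)
    (hμ : Multiset.card μ = n) :
    Set.BijOn (fun w : Equiv.Perm (Fin n) × (Fin n → ℕ) => chainOf w.1 w.2)
      {w | content w.2 = μ}
      {c | IsMaxChain' (⟨∅, 0, by simp⟩ : WSub n)
             (⟨Finset.univ, μ, by simp [hμ]⟩ : WSub n) c} := by
  refine ⟨?_, ?_, ?_⟩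
  · rintro ⟨σ, c⟩ hw
    simp only [Set.mem_setOf_eq] at hw ⊢
    refine ⟨Aux.chainOf_chain' σ c, Aux.chainOf_head σ c, ?_⟩
    rw [Aux.chainOf_getLast, Aux.chainElt_last]
    exact congrArg some (WSub.ext rfl hw)
  · rintro ⟨σ, c⟩ - ⟨σ', c'⟩ - h
    obtain ⟨h1, h2⟩ := Aux.chainOf_inj h
    exact Prod.ext h1 h2
  · rintro L ⟨hch, hhd, hlast⟩
    obtain ⟨σ, c, hc, hL'⟩ := Aux.chainOf_surj μ hμ L hch hhd hlast
    exact ⟨(σ, c), hc, hL'⟩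
end

section
/- Let n ≥ 1 and let μ be a weak composition of n. Then the interval [0̂, ([n],μ)] of B_n^w has exactly one maximal chain whose label word is strictly increasing in the product order on [n]×{1,2,…}, namely the chain c(σ₀,c₀) where σ₀ is the identity permutation and c₀(1) ≤ c₀(2) ≤ ⋯ ≤ c₀(n) is the unique weakly increasing color sequence of content μ; moreover the label word of this chain lexicographically precedes the label word of every other maximal chain of the interval. -/
/-- The label of the covering step `p ⋖ q`: (new letter, new color). -/
def lab {n : ℕ} (p q : WSub n) : ℕ × ℕ :=
  (∑ x ∈ q.carrier \ p.carrier, (x : ℕ), (q.wt - p.wt).sum)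

/-- The label word of a chain (listed bottom to top). -/
def labelWord {n : ℕ} (c : List (WSub n)) : List (ℕ × ℕ) :=
  List.zipWith lab c c.tail

lemma WSub.le_def {n : ℕ} {p q : WSub n} : p ≤ q ↔ p.carrier ⊆ q.carrier ∧ p.wt ≤ q.wt := Iff.rfl

lemma WSub.eq_of_le_of_card {n : ℕ} {p q : WSub n} (h : p ≤ q)
    (hc : q.carrier.card ≤ p.carrier.card) : p = q := by
  have h1 : p.carrier = q.carrier := Finset.eq_of_subset_of_card_le h.1 hc
  refine WSub.ext h1 (Multiset.eq_of_le_of_card_le h.2 ?_)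
  rw [p.card_eq, q.card_eq, h1]

lemma WSub.covBy_iff {n : ℕ} {p q : WSub n} :
    p ⋖ q ↔ ∃ x : Fin n, x ∉ p.carrier ∧ ∃ i : ℕ,
      q.carrier = insert x p.carrier ∧ q.wt = i ::ₘ p.wt := by
  constructor
  · rintro ⟨hlt, hmid⟩
    have hle := hlt.le
    have hcard : p.carrier.card < q.carrier.card := by
      by_contra hc
      exact hlt.ne (WSub.eq_of_le_of_card hle (le_of_not_gt hc))
    obtain ⟨x, hxq, hxp⟩ := Finset.exists_of_ssubset
      (Finset.ssubset_def.mpr ⟨hle.1, fun hqp => absurd (Finset.card_le_card hqp) (by omega)⟩)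
    -- pick i in q.wt - p.wt
    have hwc : Multiset.card p.wt < Multiset.card q.wt := by
      rw [p.card_eq, q.card_eq]; exact hcard
    have hsub : p.wt ≤ q.wt := hle.2
    have hne : q.wt - p.wt ≠ 0 := by
      intro h0
      have := Multiset.card_sub hsub
      rw [h0] at this
      simp at this; omega
    obtain ⟨i, hi⟩ := Multiset.exists_mem_of_ne_zero hne
    have hicount : p.wt.count i < q.wt.count i := by
      have := Multiset.count_sub i q.wt p.wt
      have hpos : 0 < Multiset.count i (q.wt - p.wt) := Multiset.count_pos.mpr hi
      omega
    -- the middle candidate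
    set m : WSub n := ⟨insert x p.carrier, i ::ₘ p.wt, by
        rw [Multiset.card_cons, p.card_eq, Finset.card_insert_of_notMem hxp]⟩ with hm
    have hmidle : m ≤ q := by
      constructor
      · exact Finset.insert_subset hxq hle.1
      · rw [Multiset.le_iff_count]
        intro a
        rw [Multiset.count_cons]
        rcases eq_or_ne a i with rfl | hai
        · simpa using hicount
        · simp [hai]
          exact Multiset.count_le_of_le a hsub
    have hplt : p < m := by
      constructor
      · exact ⟨Finset.subset_insert _ _, Multiset.le_cons_self _ _⟩
      · intro hcon
        exact hxp (hcon.1 (Finset.mem_insert_self _ _))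
    rcases eq_or_lt_of_le hmidle with heq | hltq
    · exact ⟨x, hxp, i, by rw [← heq], by rw [← heq]⟩
    · exact absurd hltq (hmid hplt)
  · rintro ⟨x, hxp, i, hcar, hwt⟩
    have hcard : q.carrier.card = p.carrier.card + 1 := by
      rw [hcar, Finset.card_insert_of_notMem hxp]
    constructor
    · constructor
      · exact ⟨hcar ▸ Finset.subset_insert _ _, hwt ▸ Multiset.le_cons_self _ _⟩
      · intro hqp
        have : x ∈ p.carrier := hqp.1 (hcar ▸ Finset.mem_insert_self x p.carrier)
        exact hxp this
    · intro m hpm hmq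
      have h1 : p.carrier.card < m.carrier.card := by
        by_contra hc
        exact hpm.ne (WSub.eq_of_le_of_card hpm.le (le_of_not_gt hc))
      have h2 : m.carrier.card ≤ q.carrier.card := Finset.card_le_card hmq.le.1
      have : m.carrier.card = q.carrier.card := by omega
      exact hmq.ne (WSub.eq_of_le_of_card hmq.le (le_of_eq this.symm))


lemma labelWord_cons_cons {n : ℕ} (p q : WSub n) (l : List (WSub n)) :
    labelWord (p :: q :: l) = lab p q :: labelWord (q :: l) := rfl

lemma sdiff_insert_eq {n : ℕ} {p : Finset (Fin n)} {x : Fin n} (hx : x ∉ p) :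
    insert x p \ p = {x} := by
  ext y
  simp only [Finset.mem_sdiff, Finset.mem_insert, Finset.mem_singleton]
  constructor
  · rintro ⟨h1 | h1, h2⟩ <;> tauto
  · rintro rfl; exact ⟨Or.inl rfl, hx⟩

lemma cons_sub_self {i : ℕ} (w : Multiset ℕ) : (i ::ₘ w) - w = {i} := by
  ext a
  rw [Multiset.count_sub, Multiset.count_cons]
  rcases eq_or_ne a i with rfl | h
  · simp
  · simp [h, Multiset.count_singleton]

lemma lab_of_cover {n : ℕ} {p q : WSub n} {x : Fin n} {i : ℕ} (hx : x ∉ p.carrier)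
    (hcar : q.carrier = insert x p.carrier) (hwt : q.wt = i ::ₘ p.wt) :
    lab p q = ((x : ℕ), i) := by
  unfold lab
  rw [hcar, hwt, sdiff_insert_eq hx, cons_sub_self]
  simp

lemma chain_head_le_getLast {n : ℕ} :
    ∀ (l : List (WSub n)) (p : WSub n), List.Chain' (· ⋖ ·) (p :: l) →
      p ≤ (p :: l).getLast (List.cons_ne_nil _ _)
  | [], p, _ => le_rfl
  | q :: l, p, h => by
    have h1 : p ⋖ q := List.isChain_cons_cons.mp h |>.1
    have h2 := chain_head_le_getLast l q (List.isChain_cons_cons.mp h).2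
    rw [List.getLast_cons (List.cons_ne_nil _ _)]
    exact h1.le.trans h2

/-- the label multisets of a cover chain. -/
lemma label_multisets {n : ℕ} :
    ∀ (l : List (WSub n)) (p : WSub n), List.Chain' (· ⋖ ·) (p :: l) →
      (((labelWord (p :: l)).map Prod.fst : List ℕ) : Multiset ℕ) =
        (((p :: l).getLast (List.cons_ne_nil _ _)).carrier \ p.carrier).val.map Fin.val ∧
      (((labelWord (p :: l)).map Prod.snd : List ℕ) : Multiset ℕ) =
        ((p :: l).getLast (List.cons_ne_nil _ _)).wt - p.wt
  | [], p, _ => by simp [labelWord]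
  | q :: l, p, h => by
    obtain ⟨hpq, hch⟩ := List.isChain_cons_cons.mp h
    obtain ⟨x, hx, i, hcar, hwt⟩ := WSub.covBy_iff.mp hpq
    obtain ⟨ih1, ih2⟩ := label_multisets l q hch
    have hqt : q ≤ ((q :: l).getLast (List.cons_ne_nil _ _)) := chain_head_le_getLast l q hch
    set t := ((q :: l).getLast (List.cons_ne_nil _ _)) with ht
    have hlast : ((p :: q :: l).getLast (List.cons_ne_nil _ _)) = t := by
      rw [List.getLast_cons (List.cons_ne_nil _ _)]
    rw [labelWord_cons_cons, lab_of_cover hx hcar hwt, hlast]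
    constructor
    · rw [List.map_cons, ← Multiset.cons_coe, ih1]
      have hcs : (t.carrier \ p.carrier).val = x ::ₘ (t.carrier \ q.carrier).val := by
        have hxt : x ∈ t.carrier := hqt.1 (hcar ▸ Finset.mem_insert_self _ _)
        have hxnq : x ∉ t.carrier \ q.carrier := by
          simp [hcar]
        have : t.carrier \ p.carrier = insert x (t.carrier \ q.carrier) := by
          ext y
          simp only [Finset.mem_sdiff, Finset.mem_insert, hcar]
          constructor
          · rintro ⟨hyt, hyp⟩
            rcases eq_or_ne y x with rfl | hyx
            · exact Or.inl rfl
            · exact Or.inr ⟨hyt, by simp [hyx, hyp]⟩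
          · rintro (rfl | ⟨hyt, hyq⟩)
            · exact ⟨hxt, hx⟩
            · exact ⟨hyt, fun hyp => hyq (Or.inr hyp)⟩
        rw [this, Finset.insert_val_of_notMem hxnq]
      rw [hcs, Multiset.map_cons]
    · rw [List.map_cons, ← Multiset.cons_coe, ih2]
      have hle : i ::ₘ p.wt ≤ t.wt := hwt ▸ hqt.2
      ext a
      rw [Multiset.count_cons, Multiset.count_sub, Multiset.count_sub, hwt,
        Multiset.count_cons]
      have := Multiset.count_le_of_le a hle
      rw [Multiset.count_cons] at this
      rcases eq_or_ne a i with rfl | hai <;> simp_all <;> omega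

section Canon
variable {n : ℕ} (c₀ : Fin n → ℕ)

lemma P_carrier (k : ℕ) :
    (chainElt 1 c₀ k).carrier = Finset.univ.filter (fun p : Fin n => (p : ℕ) < k) := by
  simp [chainElt]

lemma P_wt (k : ℕ) :
    (chainElt 1 c₀ k).wt =
      (Finset.univ.filter (fun p : Fin n => (p : ℕ) < k)).val.map c₀ := by
  simp [chainElt]

lemma filter_succ (k : ℕ) (hk : k < n) :
    (Finset.univ.filter (fun p : Fin n => (p : ℕ) < k + 1)) =
      insert ⟨k, hk⟩ (Finset.univ.filter (fun p : Fin n => (p : ℕ) < k)) := by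
  ext y
  simp only [Finset.mem_filter, Finset.mem_univ, true_and, Finset.mem_insert, Fin.ext_iff]
  omega

lemma k_not_mem_filter (k : ℕ) (hk : k < n) :
    (⟨k, hk⟩ : Fin n) ∉ Finset.univ.filter (fun p : Fin n => (p : ℕ) < k) := by simp

lemma P_covby (k : ℕ) (hk : k < n) : chainElt 1 c₀ k ⋖ chainElt 1 c₀ (k + 1) := by
  rw [WSub.covBy_iff]
  refine ⟨⟨k, hk⟩, ?_, c₀ ⟨k, hk⟩, ?_, ?_⟩
  · rw [P_carrier]; exact k_not_mem_filter k hk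
  · rw [P_carrier, P_carrier, filter_succ k hk]
  · rw [P_wt, P_wt, filter_succ k hk,
      Finset.insert_val_of_notMem (k_not_mem_filter k hk), Multiset.map_cons]

lemma P_lab (k : ℕ) (hk : k < n) :
    lab (chainElt 1 c₀ k) (chainElt 1 c₀ (k + 1)) = (k, c₀ ⟨k, hk⟩) := by
  have h1 : (⟨k, hk⟩ : Fin n) ∉ (chainElt 1 c₀ k).carrier := by
    rw [P_carrier]; exact k_not_mem_filter k hk
  have h2 : (chainElt 1 c₀ (k+1)).carrier = insert ⟨k, hk⟩ (chainElt 1 c₀ k).carrier := by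
    rw [P_carrier, P_carrier, filter_succ k hk]
  have h3 : (chainElt 1 c₀ (k+1)).wt = c₀ ⟨k, hk⟩ ::ₘ (chainElt 1 c₀ k).wt := by
    rw [P_wt, P_wt, filter_succ k hk,
      Finset.insert_val_of_notMem (k_not_mem_filter k hk), Multiset.map_cons]
  exact lab_of_cover h1 h2 h3

lemma P_zero : chainElt 1 c₀ 0 = (⟨∅, 0, by simp⟩ : WSub n) := by
  refine WSub.ext ?_ ?_
  · rw [P_carrier]; ext y; simp
  · rw [P_wt]
    have : (Finset.univ.filter (fun p : Fin n => (p : ℕ) < 0)) = (∅ : Finset (Fin n)) := by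
      ext y; simp
    rw [this]; rfl

lemma P_top : chainElt 1 c₀ n = (⟨Finset.univ, content c₀, by simp [content]⟩ : WSub n) := by
  have hfil : (Finset.univ.filter (fun p : Fin n => (p : ℕ) < n)) = Finset.univ := by
    ext y; simp [y.isLt]
  refine WSub.ext ?_ ?_
  · rw [P_carrier, hfil]
  · rw [P_wt, hfil]; rfl

/-- remaining colors at stage k. -/
lemma remaining_colors (k : ℕ) :
    (⟨Finset.univ, content c₀, by simp [content]⟩ : WSub n).wt - (chainElt 1 c₀ k).wt =
      (Finset.univ.filter (fun p : Fin n => ¬ (p : ℕ) < k)).val.map c₀ := by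
  show content c₀ - _ = _
  rw [P_wt]
  have : content c₀ = (Finset.univ.filter (fun p : Fin n => (p : ℕ) < k)).val.map c₀ +
      (Finset.univ.filter (fun p : Fin n => ¬ (p : ℕ) < k)).val.map c₀ := by
    rw [content, ← Multiset.map_add]
    congr 1
    rw [Finset.filter_val, Finset.filter_val, Multiset.filter_add_not]
  rw [this, add_tsub_cancel_left]

end Canon

section Main
variable {n : ℕ} {c₀ : Fin n → ℕ}

/-- abbreviation for the top element. -/
def wtop (c₀ : Fin n → ℕ) : WSub n := ⟨Finset.univ, content c₀, by simp [content]⟩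

lemma k_lt_n_of_cover {k : ℕ} {q : WSub n} (hpq : chainElt 1 c₀ k ⋖ q) (hk : k ≤ n) :
    k < n := by
  rcases lt_or_eq_of_le hk with h | rfl
  · exact h
  · obtain ⟨x, hx, _⟩ := WSub.covBy_iff.mp hpq
    rw [P_carrier] at hx
    exact absurd (by simp [x.isLt]) hx

lemma le_of_not_mem_P {k : ℕ} {x : Fin n} (hx : x ∉ (chainElt 1 c₀ k).carrier) :
    k ≤ (x : ℕ) := by
  rw [P_carrier] at hx
  simp only [Finset.mem_filter, Finset.mem_univ, true_and] at hx
  omega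

lemma color_ge (hmono : Monotone c₀) {k : ℕ} (hk : k < n) {i : ℕ}
    (hi : i ∈ (wtop c₀).wt - (chainElt 1 c₀ k).wt) : c₀ ⟨k, hk⟩ ≤ i := by
  rw [show (wtop c₀).wt = (⟨Finset.univ, content c₀, by simp [content]⟩ : WSub n).wt from rfl,
    remaining_colors] at hi
  obtain ⟨m, hm, rfl⟩ := Multiset.mem_map.mp hi
  rw [Finset.mem_val, Finset.mem_filter] at hm
  exact hmono (show (⟨k, hk⟩ : Fin n) ≤ m by
    simp only [not_lt] at hm; exact hm.2)

lemma mem_remaining (hk : k < n) :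
    c₀ ⟨k, hk⟩ ∈ (wtop c₀).wt - (chainElt 1 c₀ k).wt := by
  rw [show (wtop c₀).wt = (⟨Finset.univ, content c₀, by simp [content]⟩ : WSub n).wt from rfl,
    remaining_colors]
  exact Multiset.mem_map.mpr ⟨⟨k, hk⟩, by simp, rfl⟩

lemma top_sdiff_carrier (k : ℕ) :
    (wtop c₀).carrier \ (chainElt 1 c₀ k).carrier =
      Finset.univ.filter (fun p : Fin n => ¬ (p : ℕ) < k) := by
  rw [P_carrier]
  ext y
  simp [wtop]

lemma uniq_aux (hmono : Monotone c₀) :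
    ∀ (l : List (WSub n)) (k : ℕ), k ≤ n →
      List.Chain' (· ⋖ ·) (chainElt 1 c₀ k :: l) →
      (chainElt 1 c₀ k :: l).getLast (List.cons_ne_nil _ _) = wtop c₀ →
      (labelWord (chainElt 1 c₀ k :: l)).Chain' (· < ·) →
      chainElt 1 c₀ k :: l = (List.range' k (n + 1 - k)).map (chainElt 1 c₀)
  | [], k, hk, _, hlast, _ => by
    have hkn : k = n := by
      by_contra hne
      have hklt : k < n := lt_of_le_of_ne hk hne
      have : (⟨k, hklt⟩ : Fin n) ∈ (chainElt 1 c₀ k).carrier := by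
        rw [show chainElt 1 c₀ k = (chainElt 1 c₀ k :: []).getLast (List.cons_ne_nil _ _)
          from rfl, hlast]
        simp [wtop]
      rw [P_carrier] at this
      simp at this
    subst hkn
    simp [List.range'_succ]
  | q :: l, k, hk, hch, hlast, hlab => by
    obtain ⟨hpq, hch'⟩ := List.isChain_cons_cons.mp hch
    have hklt : k < n := k_lt_n_of_cover hpq hk
    obtain ⟨x, hx, i, hcar, hwt⟩ := WSub.covBy_iff.mp hpq
    have hlast' : (q :: l).getLast (List.cons_ne_nil _ _) = wtop c₀ := by
      rw [← hlast, List.getLast_cons (List.cons_ne_nil _ _)]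
    -- label multisets of the whole chain
    obtain ⟨hfst, hsnd⟩ := label_multisets (q :: l) (chainElt 1 c₀ k) hch
    rw [show ((chainElt 1 c₀ k :: q :: l).getLast (List.cons_ne_nil _ _)) = wtop c₀ from hlast]
      at hfst hsnd
    rw [top_sdiff_carrier] at hfst
    rw [labelWord_cons_cons, lab_of_cover hx hcar hwt] at hfst hsnd hlab
    -- pairwise
    have hpw := (List.isChain_iff_pairwise.mp hlab)
    have hhead : ∀ b ∈ labelWord (q :: l), ((x : ℕ), i) < b :=
      (List.pairwise_cons.mp hpw).1
    -- x = k
    have hxk : (x : ℕ) = k := by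
      have h1 : k ≤ (x : ℕ) := le_of_not_mem_P hx
      have h2 : (k : ℕ) ∈ List.map Prod.fst ((((x : ℕ), i)) :: labelWord (q :: l)) := by
        rw [← Multiset.mem_coe, hfst]
        exact Multiset.mem_map.mpr ⟨⟨k, hklt⟩, by simp, rfl⟩
      rw [List.map_cons] at h2
      rcases List.mem_cons.mp h2 with h2 | h2
      · omega
      · obtain ⟨b, hb, hbk⟩ := List.mem_map.mp h2
        have := (hhead b hb).le.1
        omega
    -- i = c₀ k
    have hik : i = c₀ ⟨k, hklt⟩ := by
      have h1 : c₀ ⟨k, hklt⟩ ≤ i := by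
        apply color_ge hmono hklt
        rw [← hsnd, Multiset.mem_coe, List.map_cons]
        exact List.mem_cons_self
      have h2 : i ≤ c₀ ⟨k, hklt⟩ := by
        have hmem : c₀ ⟨k, hklt⟩ ∈ List.map Prod.snd ((((x : ℕ), i)) :: labelWord (q :: l)) := by
          rw [← Multiset.mem_coe, hsnd]
          exact mem_remaining hklt
        rw [List.map_cons] at hmem
        rcases List.mem_cons.mp hmem with h2 | h2
        · omega
        · obtain ⟨b, hb, hbk⟩ := List.mem_map.mp h2
          have := (hhead b hb).le.2
          omega
      omega
    -- q is the next canonical element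
    have hxval : x = ⟨k, hklt⟩ := Fin.ext hxk
    have hq : q = chainElt 1 c₀ (k + 1) := by
      refine WSub.ext ?_ ?_
      · rw [hcar, hxval, P_carrier, P_carrier, filter_succ k hklt]
      · rw [hwt, hik, P_wt, P_wt, filter_succ k hklt,
          Finset.insert_val_of_notMem (k_not_mem_filter k hklt), Multiset.map_cons]
    subst hq
    have ih := uniq_aux hmono l (k + 1) hklt hch' hlast' hlab.tail
    rw [show n + 1 - k = (n - k) + 1 by omega, List.range'_succ, List.map_cons]
    rw [ih, show n + 1 - (k + 1) = n - k by omega]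

lemma map_range'_cons (c₀ : Fin n → ℕ) (k m : ℕ) :
    (List.range' k (m + 1)).map (chainElt 1 c₀) =
      chainElt 1 c₀ k :: (List.range' (k + 1) m).map (chainElt 1 c₀) := by
  rw [List.range'_succ, List.map_cons]

lemma k_eq_n_of_top (k : ℕ) (hk : k ≤ n) (h : chainElt 1 c₀ k = wtop c₀) : k = n := by
  by_contra hne
  have hklt : k < n := lt_of_le_of_ne hk hne
  have : (⟨k, hklt⟩ : Fin n) ∈ (chainElt 1 c₀ k).carrier := by rw [h]; simp [wtop]
  rw [P_carrier] at this
  simp at this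

lemma canon_word_cons (k : ℕ) (hklt : k < n) :
    labelWord ((List.range' k (n + 1 - k)).map (chainElt 1 c₀)) =
      ((k : ℕ), c₀ ⟨k, hklt⟩) :: labelWord ((List.range' (k + 1) (n - k)).map (chainElt 1 c₀)) := by
  rw [show n + 1 - k = (n - k) + 1 by omega, map_range'_cons,
    show n - k = (n - k - 1) + 1 by omega, map_range'_cons, labelWord_cons_cons,
    P_lab c₀ k hklt]

lemma lex_aux (hmono : Monotone c₀) :
    ∀ (l : List (WSub n)) (k : ℕ), k ≤ n →
      List.Chain' (· ⋖ ·) (chainElt 1 c₀ k :: l) →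
      (chainElt 1 c₀ k :: l).getLast (List.cons_ne_nil _ _) = wtop c₀ →
      chainElt 1 c₀ k :: l ≠ (List.range' k (n + 1 - k)).map (chainElt 1 c₀) →
      LexPrec (labelWord ((List.range' k (n + 1 - k)).map (chainElt 1 c₀)))
        (labelWord (chainElt 1 c₀ k :: l))
  | [], k, hk, _, hlast, hne => by
    have hkn : k = n := k_eq_n_of_top k hk hlast
    subst hkn
    exact absurd (by simp [List.range'_succ]) hne
  | q :: l, k, hk, hch, hlast, hne => by
    obtain ⟨hpq, hch'⟩ := List.isChain_cons_cons.mp hch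
    have hklt : k < n := k_lt_n_of_cover hpq hk
    obtain ⟨x, hx, i, hcar, hwt⟩ := WSub.covBy_iff.mp hpq
    have hlast' : (q :: l).getLast (List.cons_ne_nil _ _) = wtop c₀ := by
      rw [← hlast, List.getLast_cons (List.cons_ne_nil _ _)]
    have hqt : q ≤ wtop c₀ := hlast' ▸ chain_head_le_getLast l q hch'
    have hi_mem : i ∈ (wtop c₀).wt - (chainElt 1 c₀ k).wt := by
      have h := Multiset.count_le_of_le i hqt.2
      rw [hwt, Multiset.count_cons_self] at h
      rw [← Multiset.count_pos, Multiset.count_sub]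
      omega
    have hle : (((k : ℕ), c₀ ⟨k, hklt⟩) : ℕ × ℕ) ≤ ((x : ℕ), i) :=
      Prod.mk_le_mk.mpr ⟨le_of_not_mem_P hx, color_ge hmono hklt hi_mem⟩
    rw [canon_word_cons k hklt, labelWord_cons_cons, lab_of_cover hx hcar hwt]
    by_cases heq : (((k : ℕ), c₀ ⟨k, hklt⟩) : ℕ × ℕ) = ((x : ℕ), i)
    · -- equal first labels: recurse
      obtain ⟨hxk, hik⟩ : (k : ℕ) = (x : ℕ) ∧ c₀ ⟨k, hklt⟩ = i := by
        simpa [Prod.ext_iff] using heq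
      have hxval : x = ⟨k, hklt⟩ := Fin.ext hxk.symm
      have hq : q = chainElt 1 c₀ (k + 1) := by
        refine WSub.ext ?_ ?_
        · rw [hcar, hxval, P_carrier, P_carrier, filter_succ k hklt]
        · rw [hwt, ← hik, P_wt, P_wt, filter_succ k hklt,
            Finset.insert_val_of_notMem (k_not_mem_filter k hklt), Multiset.map_cons]
      subst hq
      have hne' : chainElt 1 c₀ (k + 1) :: l ≠
          (List.range' (k + 1) (n + 1 - (k + 1))).map (chainElt 1 c₀) := by
        intro h
        apply hne
        rw [show n + 1 - k = (n - k) + 1 by omega, map_range'_cons, ← show n + 1 - (k + 1) = n - k by omega, h]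
      have ih := lex_aux hmono l (k + 1) hklt hch' hlast' hne'
      rw [show n + 1 - (k + 1) = n - k by omega] at ih
      exact Or.inl ⟨heq, ih⟩
    · exact Or.inr ⟨heq, lt_of_le_of_ne hle heq⟩

lemma canon_labels_chain (hmono : Monotone c₀) :
    ∀ (m k : ℕ), k + m ≤ n →
      List.Chain' (· < ·) (labelWord ((List.range' k (m + 1)).map (chainElt 1 c₀)))
  | 0, k, _ => by simp [List.range'_succ, labelWord]; exact List.isChain_nil
  | m + 1, k, h => by
    have hklt : k < n := by omega
    rw [map_range'_cons, map_range'_cons, labelWord_cons_cons, P_lab c₀ k hklt, ← map_range'_cons]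
    refine List.isChain_cons.mpr ⟨?_, canon_labels_chain hmono m (k + 1) (by omega)⟩
    intro b hb
    rcases m with _ | m'
    · simp [List.range'_succ, labelWord] at hb
    · rw [map_range'_cons, map_range'_cons, labelWord_cons_cons,
        P_lab c₀ (k + 1) (by omega)] at hb
      simp only [List.head?_cons, Option.mem_def, Option.some.injEq] at hb
      subst hb
      refine Prod.mk_lt_mk.mpr (Or.inl ⟨by omega, hmono ?_⟩)
      show (⟨k, hklt⟩ : Fin n) ≤ ⟨k + 1, by omega⟩
      show k ≤ k + 1
      omega

lemma chainOf_eq : chainOf 1 c₀ = (List.range' 0 (n + 1)).map (chainElt 1 c₀) := by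
  rw [chainOf, List.range_eq_range']

lemma canon_isMaxChain (hn : 1 ≤ n) :
    IsMaxChain' (⟨∅, 0, by simp⟩ : WSub n) (wtop c₀) (chainOf 1 c₀) := by
  refine ⟨?_, ?_, ?_⟩
  · show List.IsChain _ (chainOf 1 c₀)
    rw [chainOf, List.isChain_map, List.isChain_range_succ]
    intro m hm
    exact P_covby c₀ m hm
  · rw [chainOf_eq, List.range'_succ, List.map_cons, List.head?_cons, P_zero]
  · rw [chainOf, List.range_succ, List.map_append]
    rw [List.map_singleton, List.getLast?_concat, P_top]
    rfl

theorem main_thm (n : ℕ) (hn : 1 ≤ n)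
    (μ : Multiset ℕ) (hμ : Multiset.card μ = n)
    (c₀ : Fin n → ℕ) (hmono : Monotone c₀) (hc₀ : content c₀ = μ) :
    (IsMaxChain' (⟨∅, 0, by simp⟩ : WSub n) (⟨Finset.univ, μ, by simp [hμ]⟩ : WSub n)
        (chainOf 1 c₀) ∧
      (labelWord (chainOf 1 c₀)).Chain' (· < ·)) ∧
    (∀ d : List (WSub n),
      IsMaxChain' (⟨∅, 0, by simp⟩ : WSub n) (⟨Finset.univ, μ, by simp [hμ]⟩ : WSub n) d →
      (labelWord d).Chain' (· < ·) → d = chainOf 1 c₀) ∧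
    (∀ d : List (WSub n),
      IsMaxChain' (⟨∅, 0, by simp⟩ : WSub n) (⟨Finset.univ, μ, by simp [hμ]⟩ : WSub n) d →
      d ≠ chainOf 1 c₀ → LexPrec (labelWord (chainOf 1 c₀)) (labelWord d)) := by
  subst hc₀
  have htop : (⟨Finset.univ, content c₀, by simp [hμ]⟩ : WSub n) = wtop c₀ := rfl
  constructor
  · constructor
    · rw [htop]; exact canon_isMaxChain hn
    · rw [chainOf_eq]
      exact canon_labels_chain hmono n 0 (by omega)
  constructor
  · rintro d ⟨hch, hhead, hlast⟩ hlab
    rcases d with _ | ⟨p, l⟩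
    · simp at hhead
    rw [List.head?_cons, Option.some.injEq] at hhead
    have hp : p = chainElt 1 c₀ 0 := by rw [P_zero, ← hhead]
    subst hp
    have hlast' : (chainElt 1 c₀ 0 :: l).getLast (List.cons_ne_nil _ _) = wtop c₀ := by
      rw [List.getLast?_eq_getLast (List.cons_ne_nil _ _), Option.some.injEq] at hlast
      rw [hlast]; rfl
    have := uniq_aux hmono l 0 (by omega) hch hlast' hlab
    rw [chainOf_eq]
    exact this
  · rintro d ⟨hch, hhead, hlast⟩ hne
    rcases d with _ | ⟨p, l⟩
    · simp at hhead
    rw [List.head?_cons, Option.some.injEq] at hhead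
    have hp : p = chainElt 1 c₀ 0 := by rw [P_zero, ← hhead]
    subst hp
    have hlast' : (chainElt 1 c₀ 0 :: l).getLast (List.cons_ne_nil _ _) = wtop c₀ := by
      rw [List.getLast?_eq_getLast (List.cons_ne_nil _ _), Option.some.injEq] at hlast
      rw [hlast]; rfl
    have hne' : chainElt 1 c₀ 0 :: l ≠ (List.range' 0 (n + 1 - 0)).map (chainElt 1 c₀) := by
      rwa [Nat.sub_zero, ← chainOf_eq]
    have := lex_aux hmono l 0 (by omega) hch hlast' hne'
    rwa [Nat.sub_zero, ← chainOf_eq] at this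
end Main


theorem unique_increasing_chain_in_maximal_interval (n : ℕ) (hn : 1 ≤ n)
    (μ : Multiset ℕ) (hμ : Multiset.card μ = n)
    (c₀ : Fin n → ℕ) (hmono : Monotone c₀) (hc₀ : content c₀ = μ) :
    (IsMaxChain' (⟨∅, 0, by simp⟩ : WSub n) (⟨Finset.univ, μ, by simp [hμ]⟩ : WSub n)
        (chainOf 1 c₀) ∧
      (labelWord (chainOf 1 c₀)).Chain' (· < ·)) ∧
    (∀ d : List (WSub n),
      IsMaxChain' (⟨∅, 0, by simp⟩ : WSub n) (⟨Finset.univ, μ, by simp [hμ]⟩ : WSub n) d →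
      (labelWord d).Chain' (· < ·) → d = chainOf 1 c₀) ∧
    (∀ d : List (WSub n),
      IsMaxChain' (⟨∅, 0, by simp⟩ : WSub n) (⟨Finset.univ, μ, by simp [hμ]⟩ : WSub n) d →
      d ≠ chainOf 1 c₀ → LexPrec (labelWord (chainOf 1 c₀)) (labelWord d)) := 
  main_thm n hn μ hμ c₀ hmono hc₀
end
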